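/- arXiv:1402.6655 — 7 statements merged into one kernel-verified Lean document; each statement's English description precedes it below -/
import Mathlib

section
/- For every x in R^n and every γ > 0, F(P_γ(x)) ≤ F_γ(x) - (γ/2)(1 - γL_f)‖G_γ(x)‖². In particular, if γ ∈ (0, 1/L_f] then F(P_γ(x)) ≤ F_γ(x). -/
open scoped RealInnerProductSpace
open Filter Topology

noncomputable section

abbrev Eucl (n : ℕ) := EuclideanSpace ℝ (Fin n)

/-- `p` is the proximal mapping of `g` with parameter `γ`:
`p x` minimizes `u ↦ g u + ‖u - x‖² / (2γ)`. -/
def IsProx {n : ℕ} (γ : ℝ) (g : Eucl n → EReal) (p : Eucl n → Eucl n) : Prop :=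
  ∀ x u, g (p x) + ((‖p x - x‖ ^ 2 / (2 * γ) : ℝ) : EReal)
        ≤ g u + ((‖u - x‖ ^ 2 / (2 * γ) : ℝ) : EReal)

/-- `g` is proper, lower semicontinuous and convex (with values in `ℝ ∪ {+∞}`). -/
def ProperLscConvex {n : ℕ} (g : Eucl n → EReal) : Prop :=
  (∃ x, g x ≠ ⊤) ∧ (∀ x, g x ≠ ⊥) ∧ LowerSemicontinuous g ∧
  (∀ x y : Eucl n, ∀ a b : ℝ, 0 ≤ a → 0 ≤ b → a + b = 1 →
    g (a • x + b • y) ≤ (a : EReal) * g x + (b : EReal) * g y)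


lemma descent {n : ℕ} (f : Eucl n → ℝ) (f' : Eucl n → Eucl n) (Lf : NNReal)
    (hf' : ∀ x, HasGradientAt f (f' x) x) (hLip : LipschitzWith Lf f')
    (x y : Eucl n) :
    f y ≤ f x + ⟪f' x, y - x⟫ + Lf / 2 * ‖y - x‖ ^ 2 := by
  set v := y - x with hv
  set h : ℝ → ℝ := fun t => f (x + t • v) - t * ⟪f' x, v⟫ - (Lf : ℝ) / 2 * (t ^ 2 * ‖v‖ ^ 2)
    with hh
  have hc : ∀ t : ℝ, HasDerivAt (fun t : ℝ => x + t • v) v t := fun t => by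
    simpa using ((hasDerivAt_id t).smul_const v).const_add x
  have hD : ∀ t : ℝ, HasDerivAt h
      (⟪f' (x + t • v), v⟫ - ⟪f' x, v⟫ - (Lf : ℝ) / 2 * (2 * t * ‖v‖ ^ 2)) t := by
    intro t
    have h1 : HasDerivAt (fun t : ℝ => f (x + t • v)) ⟪f' (x + t • v), v⟫ t := by
      have := ((hf' (x + t • v)).hasFDerivAt).comp_hasDerivAt t (hc t)
      simpa [InnerProductSpace.toDual_apply_apply, Function.comp_def] using this
    have h2 : HasDerivAt (fun t : ℝ => t * ⟪f' x, v⟫) ⟪f' x, v⟫ t := by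
      simpa using (hasDerivAt_id t).mul_const ⟪f' x, v⟫
    have h3 : HasDerivAt (fun t : ℝ => (Lf : ℝ) / 2 * (t ^ 2 * ‖v‖ ^ 2))
        ((Lf : ℝ) / 2 * (2 * t * ‖v‖ ^ 2)) t := by
      have : HasDerivAt (fun t : ℝ => t ^ 2 * ‖v‖ ^ 2) (2 * t * ‖v‖ ^ 2) t := by
        simpa [mul_comm] using (hasDerivAt_pow 2 t).mul_const (‖v‖ ^ 2)
      simpa using this.const_mul ((Lf : ℝ) / 2)
    exact (h1.sub h2).sub h3
  have hanti : AntitoneOn h (Set.Icc 0 1) := by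
    apply antitoneOn_of_deriv_nonpos (convex_Icc 0 1)
    · exact fun t _ => ((hD t).differentiableAt).continuousAt.continuousWithinAt
    · intro t ht
      exact ((hD t).differentiableAt).differentiableWithinAt
    · intro t ht
      rw [(hD t).deriv]
      rw [interior_Icc] at ht
      have hb : ⟪f' (x + t • v), v⟫ - ⟪f' x, v⟫ ≤ (Lf : ℝ) * t * ‖v‖ ^ 2 := by
        rw [← inner_sub_left]
        calc ⟪f' (x + t • v) - f' x, v⟫ ≤ ‖f' (x + t • v) - f' x‖ * ‖v‖ :=
              real_inner_le_norm _ _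
          _ ≤ (Lf : ℝ) * ‖(x + t • v) - x‖ * ‖v‖ := by
              gcongr; exact hLip.norm_sub_le _ _
          _ = (Lf : ℝ) * t * ‖v‖ ^ 2 := by
              simp [norm_smul, abs_of_pos ht.1]; ring
      nlinarith [norm_nonneg v]
  have := hanti (Set.left_mem_Icc.2 zero_le_one) (Set.right_mem_Icc.2 zero_le_one) zero_le_one
  have hx : x + v = y := by rw [hv]; abel
  simp only [hh, one_smul, zero_smul, add_zero, one_pow, one_mul, hx] at this
  norm_num at this
  have hip : ⟪f' x, v⟫ = ∑ i, f' x i * v i := by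
    simp [PiLp.inner_apply, mul_comm]
  rw [hip]
  linarith [this]

/-- For every `x` and `γ > 0`, `F(P_γ(x)) ≤ F_γ(x) - (γ/2)(1 - γ L_f)‖G_γ(x)‖²`;
in particular if `γ ∈ (0, 1/L_f]` then `F(P_γ(x)) ≤ F_γ(x)`. -/
theorem fbe_lower_bound {n : ℕ} (f : Eucl n → ℝ) (f' : Eucl n → Eucl n)
    (g : Eucl n → EReal) (γ : ℝ) (p : Eucl n → Eucl n) (Lf : NNReal)
    (hf : ConvexOn ℝ Set.univ f)
    (hf' : ∀ x, HasGradientAt f (f' x) x)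
    (hLip : LipschitzWith Lf f')
    (hg : ProperLscConvex g)
    (hγ : 0 < γ)
    (hp : IsProx γ g p) (x : Eucl n) :
    (((f (p (x - γ • f' x)) : ℝ) : EReal) + g (p (x - γ • f' x))
      ≤ ((f x + ⟪f' x, p (x - γ • f' x) - x⟫
            + ‖p (x - γ • f' x) - x‖ ^ 2 / (2 * γ) : ℝ) : EReal) + g (p (x - γ • f' x))
        - ((γ / 2 * (1 - γ * Lf) * ‖γ⁻¹ • (x - p (x - γ • f' x))‖ ^ 2 : ℝ) : EReal)) ∧
    (γ ≤ 1 / Lf →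
      ((f (p (x - γ • f' x)) : ℝ) : EReal) + g (p (x - γ • f' x))
        ≤ ((f x + ⟪f' x, p (x - γ • f' x) - x⟫
            + ‖p (x - γ • f' x) - x‖ ^ 2 / (2 * γ) : ℝ) : EReal) + g (p (x - γ • f' x))) := by
  set y := p (x - γ • f' x) with hy
  have hγ' : γ ≠ 0 := ne_of_gt hγ
  have hn : ‖γ⁻¹ • (x - y)‖ ^ 2 = γ⁻¹ ^ 2 * ‖y - x‖ ^ 2 := by
    rw [norm_smul, norm_sub_rev, mul_pow, Real.norm_eq_abs, abs_inv, abs_of_pos hγ]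
  have key : (f x + ⟪f' x, y - x⟫ + ‖y - x‖ ^ 2 / (2 * γ))
      - (γ / 2 * (1 - γ * Lf) * ‖γ⁻¹ • (x - y)‖ ^ 2)
      = f x + ⟪f' x, y - x⟫ + (Lf : ℝ) / 2 * ‖y - x‖ ^ 2 := by
    rw [hn]; field_simp; ring
  have hba : f y ≤ (f x + ⟪f' x, y - x⟫ + ‖y - x‖ ^ 2 / (2 * γ))
      - (γ / 2 * (1 - γ * Lf) * ‖γ⁻¹ • (x - y)‖ ^ 2) := by
    rw [key]; exact descent f f' Lf hf' hLip x y
  have hGbot : g y ≠ ⊥ := hg.2.1 y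
  set G := g y with hG
  clear_value G
  constructor
  · induction G using EReal.rec with
    | bot => exact absurd rfl hGbot
    | coe r =>
      rw [← EReal.coe_add, ← EReal.coe_add, ← EReal.coe_sub]
      exact EReal.coe_le_coe_iff.2 (by linarith)
    | top =>
      rw [EReal.coe_add_top, EReal.coe_add_top, EReal.top_sub_coe]
  · intro hγL
    have hc : 0 ≤ γ / 2 * (1 - γ * Lf) * ‖γ⁻¹ • (x - y)‖ ^ 2 := by
      rcases eq_or_ne (Lf : ℝ) 0 with h0 | h0
      · rw [h0]; norm_num; positivity
      · have hLpos : (0 : ℝ) < Lf := lt_of_le_of_ne (Lf.coe_nonneg) (Ne.symm h0)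
        have h1 : γ * Lf ≤ 1 := by
          rw [div_eq_mul_inv, one_mul] at hγL
          calc γ * (Lf : ℝ) ≤ (Lf : ℝ)⁻¹ * Lf := by gcongr
            _ = 1 := inv_mul_cancel₀ h0
        have : 0 ≤ 1 - γ * Lf := by linarith
        positivity
    have hba2 : f y ≤ f x + ⟪f' x, y - x⟫ + ‖y - x‖ ^ 2 / (2 * γ) := by linarith
    induction G using EReal.rec with
    | bot => exact absurd rfl hGbot
    | coe r =>
      rw [← EReal.coe_add, ← EReal.coe_add]
      exact EReal.coe_le_coe_iff.2 (by linarith)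
    | top =>
      rw [EReal.coe_add_top, EReal.coe_add_top]
end
end

section
/- If γ ∈ (0, 1/L_f), then x minimizes F = f + g if and only if x minimizes the forward-backward envelope F_γ; moreover inf F = inf F_γ. -/
open scoped RealInnerProductSpace
open Filter Topology

noncomputable section

/-- Descent lemma: quadratic upper bound from Lipschitz gradient. -/
lemma fbe_descent {n : ℕ} (f : Eucl n → ℝ) (f' : Eucl n → Eucl n) (Lf : NNReal)
    (hf' : ∀ x, HasGradientAt f (f' x) x) (hLip : LipschitzWith Lf f')
    (x u : Eucl n) :
    f u ≤ f x + ⟪f' x, u - x⟫ + (Lf : ℝ) / 2 * ‖u - x‖ ^ 2 := by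
  set v := u - x with hv
  have hline : ∀ t : ℝ, HasDerivAt (fun s : ℝ => x + s • v) v t := by
    intro t
    simpa using ((hasDerivAt_id t).smul_const v).const_add x
  have hφ : ∀ t : ℝ, HasDerivAt (fun s : ℝ => f (x + s • v)) ⟪f' (x + t • v), v⟫ t := by
    intro t
    have h1 := (hf' (x + t • v)).hasFDerivAt.comp_hasDerivAt t (hline t)
    simpa [InnerProductSpace.toDual_apply_apply, Function.comp_def] using h1
  have hcontf' : Continuous f' := hLip.continuous
  have hcont : Continuous fun t : ℝ => ⟪f' (x + t • v), v⟫ := by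
    exact (hcontf'.comp (continuous_const.add (continuous_id.smul continuous_const))).inner
      continuous_const
  have hint : ∫ t in (0:ℝ)..1, ⟪f' (x + t • v), v⟫ = f u - f x := by
    have := intervalIntegral.integral_eq_sub_of_hasDerivAt
      (fun t _ => hφ t) (hcont.intervalIntegrable 0 1)
    simpa [hv] using this
  have hbound : ∀ t ∈ Set.Icc (0:ℝ) 1,
      ⟪f' (x + t • v), v⟫ ≤ ⟪f' x, v⟫ + (Lf : ℝ) * t * ‖v‖ ^ 2 := by
    intro t ht
    have h1 : ⟪f' (x + t • v) - f' x, v⟫ ≤ ‖f' (x + t • v) - f' x‖ * ‖v‖ :=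
      real_inner_le_norm _ _
    have h2 : ‖f' (x + t • v) - f' x‖ ≤ (Lf : ℝ) * (t * ‖v‖) := by
      have := hLip.dist_le_mul (x + t • v) x
      simpa [dist_eq_norm, norm_smul, abs_of_nonneg ht.1, mul_comm] using this
    have h3 : ⟪f' (x + t • v) - f' x, v⟫ ≤ (Lf : ℝ) * t * ‖v‖ ^ 2 := by
      calc ⟪f' (x + t • v) - f' x, v⟫ ≤ ‖f' (x + t • v) - f' x‖ * ‖v‖ := h1
        _ ≤ (Lf : ℝ) * (t * ‖v‖) * ‖v‖ := by
            apply mul_le_mul_of_nonneg_right h2 (norm_nonneg _)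
        _ = (Lf : ℝ) * t * ‖v‖ ^ 2 := by ring
    have := inner_sub_left (𝕜 := ℝ) (f' (x + t • v)) (f' x) v
    linarith [this ▸ h3]
  have hval : ∫ t in (0:ℝ)..1, (⟪f' x, v⟫ + (Lf : ℝ) * ‖v‖ ^ 2 * t)
      = ⟪f' x, v⟫ + (Lf : ℝ) / 2 * ‖v‖ ^ 2 := by
    have h1 : IntervalIntegrable (fun t : ℝ => (Lf : ℝ) * ‖v‖ ^ 2 * t)
        MeasureTheory.volume 0 1 :=
      (continuous_const.mul continuous_id).intervalIntegrable 0 1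
    rw [intervalIntegral.integral_add intervalIntegrable_const h1,
      intervalIntegral.integral_const_mul, integral_id]
    norm_num
    ring
  have hbound' : ∀ t ∈ Set.Icc (0:ℝ) 1,
      ⟪f' (x + t • v), v⟫ ≤ ⟪f' x, v⟫ + (Lf : ℝ) * ‖v‖ ^ 2 * t := by
    intro t ht
    have := hbound t ht
    linarith [this]
  have hmono' : ∫ t in (0:ℝ)..1, ⟪f' (x + t • v), v⟫
      ≤ ∫ t in (0:ℝ)..1, (⟪f' x, v⟫ + (Lf : ℝ) * ‖v‖ ^ 2 * t) :=
    intervalIntegral.integral_mono_on zero_le_one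
      (hcont.intervalIntegrable 0 1)
      ((continuous_const.add (continuous_const.mul continuous_id)).intervalIntegrable 0 1)
      hbound'
  rw [hint] at hmono'
  rw [hval] at hmono'
  linarith

/-- A proper lsc convex `EReal`-valued function has an affine minorant. -/
lemma fbe_exists_affine_minorant {n : ℕ} {g : Eucl n → EReal}
    (hproper : ∃ x, g x ≠ ⊤) (hbot : ∀ x, g x ≠ ⊥)
    (hlsc : LowerSemicontinuous g)
    (hconv : ∀ x y : Eucl n, ∀ a b : ℝ, 0 ≤ a → 0 ≤ b → a + b = 1 →
      g (a • x + b • y) ≤ (a : EReal) * g x + (b : EReal) * g y) :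
    ∃ (a : Eucl n) (b : ℝ), ∀ u, ((⟪a, u⟫ + b : ℝ) : EReal) ≤ g u := by
  set epi : Set (Eucl n × ℝ) := {p | g p.1 ≤ (p.2 : EReal)} with hepi
  have hconvepi : Convex ℝ epi := by
    intro p hp q hq a b ha hb hab
    simp only [hepi, Set.mem_setOf_eq] at *
    have h1 : g (a • p.1 + b • q.1) ≤ (a : EReal) * g p.1 + (b : EReal) * g q.1 :=
      hconv p.1 q.1 a b ha hb hab
    have h2 : (a : EReal) * g p.1 ≤ (a : EReal) * (p.2 : EReal) :=
      mul_le_mul_of_nonneg_left hp (by exact_mod_cast ha)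
    have h3 : (b : EReal) * g q.1 ≤ (b : EReal) * (q.2 : EReal) :=
      mul_le_mul_of_nonneg_left hq (by exact_mod_cast hb)
    calc g ((a • p + b • q).1) ≤ (a : EReal) * g p.1 + (b : EReal) * g q.1 := h1
      _ ≤ (a : EReal) * (p.2 : EReal) + (b : EReal) * (q.2 : EReal) := add_le_add h2 h3
      _ = (((a • p + b • q).2 : ℝ) : EReal) := by
          simp [EReal.coe_mul, EReal.coe_add]
  have hclosedepi : IsClosed epi := by
    have hopen : IsOpen {p : Eucl n × ℝ | (p.2 : EReal) < g p.1} := by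
      rw [isOpen_iff_mem_nhds]
      intro p hp
      obtain ⟨q, hq1, hq2⟩ := EReal.lt_iff_exists_real_btwn.mp hp
      have hq1' : p.2 < q := by exact_mod_cast hq1
      have hU : {z | (q : EReal) < g z} ∈ 𝓝 p.1 := hlsc p.1 (q : EReal) hq2
      have hprod : ({z | (q : EReal) < g z} ×ˢ Set.Iio q) ∈ 𝓝 (p.1, p.2) :=
        prod_mem_nhds hU (Iio_mem_nhds hq1')
      rw [Prod.mk.eta] at hprod
      refine Filter.mem_of_superset hprod ?_
      rintro ⟨z, s⟩ ⟨hz, hs⟩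
      simp only [Set.mem_setOf_eq] at *
      calc ((s : ℝ) : EReal) < (q : ℝ) := by exact_mod_cast hs
        _ < g z := hz
    have : epi = {p : Eucl n × ℝ | (p.2 : EReal) < g p.1}ᶜ := by
      ext p; simp [hepi, not_lt]
    rw [this]
    exact hopen.isClosed_compl
  obtain ⟨x0, hx0⟩ := hproper
  set r0 : ℝ := (g x0).toReal with hr0
  have hgx0 : g x0 = (r0 : EReal) := (EReal.coe_toReal hx0 (hbot x0)).symm
  have hnot : (x0, r0 - 1) ∉ epi := by
    simp only [hepi, Set.mem_setOf_eq, hgx0, EReal.coe_le_coe_iff]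
    linarith
  obtain ⟨φ, u, hφ1, hφ2⟩ := geometric_hahn_banach_point_closed hconvepi hclosedepi hnot
  set β : ℝ := φ (0, 1) with hβdef
  have hsplit : ∀ (z : Eucl n) (s : ℝ), φ (z, s) = φ (z, 0) + s * β := by
    intro z s
    have : (z, s) = (z, (0 : ℝ)) + s • ((0 : Eucl n), (1 : ℝ)) := by
      simp [Prod.ext_iff]
    rw [this, map_add, map_smul]
    simp [hβdef, smul_eq_mul]
  have hmem0 : (x0, r0) ∈ epi := by simp [hepi, hgx0]
  have hβpos : 0 < β := by
    have h1 := hφ2 _ hmem0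
    rw [hsplit] at h1 hφ1
    nlinarith
  set a : Eucl n := (InnerProductSpace.toDual ℝ (Eucl n)).symm
    (φ.comp (ContinuousLinearMap.inl ℝ (Eucl n) ℝ)) with hadef
  have ha : ∀ z : Eucl n, ⟪a, z⟫ = φ (z, 0) := by
    intro z
    rw [hadef, InnerProductSpace.toDual_symm_apply]
    rfl
  refine ⟨-(β⁻¹) • a, u / β, fun w => ?_⟩
  by_cases hw : g w = ⊤
  · rw [hw]; exact le_top
  · set s : ℝ := (g w).toReal with hs
    have hgw : g w = (s : EReal) := (EReal.coe_toReal hw (hbot w)).symm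
    have hmem : (w, s) ∈ epi := by simp [hepi, hgw]
    have h1 := hφ2 _ hmem
    rw [hsplit, ← ha] at h1
    have h2 : ⟪-(β⁻¹) • a, w⟫ + u / β ≤ s := by
      rw [real_inner_smul_left]
      have h3 := mul_lt_mul_of_pos_right h1 (inv_pos.mpr hβpos)
      have h4 : (⟪a, w⟫ + s * β) * β⁻¹ = ⟪a, w⟫ * β⁻¹ + s := by
        field_simp
      rw [h4] at h3
      have h5 : u / β = u * β⁻¹ := div_eq_mul_inv u β
      linarith
    rw [hgw]
    exact_mod_cast h2

/-- For `γ ∈ (0, 1/L_f)`, `x` minimizes `F = f + g` iff it minimizes the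
forward-backward envelope `F_γ`, and `inf F = inf F_γ`. -/
theorem fbe_equivalence {n : ℕ} (f : Eucl n → ℝ) (f' : Eucl n → Eucl n)
    (g : Eucl n → EReal) (γ : ℝ) (Lf : NNReal)
    (hf : ConvexOn ℝ Set.univ f) (hf2 : ContDiff ℝ 2 f)
    (hf' : ∀ x, HasGradientAt f (f' x) x)
    (hLip : LipschitzWith Lf f')
    (hg : ProperLscConvex g)
    (hγ : 0 < γ) (hγL : γ < 1 / Lf) :
    -- `F x = f x + g x`,
    -- `F_γ x = inf_u (f x + ⟪∇f x, u - x⟫ + g u + ‖u - x‖²/(2γ))`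
    (∀ x : Eucl n,
      (∀ y, ((f x : ℝ) : EReal) + g x ≤ ((f y : ℝ) : EReal) + g y) ↔
      (∀ y, (⨅ u : Eucl n, ((f x + ⟪f' x, u - x⟫ + ‖u - x‖ ^ 2 / (2 * γ) : ℝ) : EReal) + g u)
          ≤ (⨅ u : Eucl n, ((f y + ⟪f' y, u - y⟫ + ‖u - y‖ ^ 2 / (2 * γ) : ℝ) : EReal) + g u))) ∧
    (⨅ x : Eucl n, ((f x : ℝ) : EReal) + g x)
      = (⨅ x : Eucl n, ⨅ u : Eucl n,
          ((f x + ⟪f' x, u - x⟫ + ‖u - x‖ ^ 2 / (2 * γ) : ℝ) : EReal) + g u) := by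
  obtain ⟨hproper, hbot, hlsc, hconv⟩ := hg
  -- basic numeric facts
  have hLγ : (Lf : ℝ) * γ < 1 := by
    rcases eq_or_lt_of_le (Lf.coe_nonneg) with h | h
    · rw [← h]; norm_num
    · nlinarith [(lt_div_iff₀ h).mp hγL]
  obtain ⟨c, hcdef⟩ : ∃ c : ℝ, c = 1 / (2 * γ) - (Lf : ℝ) / 2 := ⟨_, rfl⟩
  have hc : 0 < c := by
    rw [hcdef, sub_pos, div_lt_div_iff₀ two_pos (by positivity)]
    nlinarith
  -- the key pointwise real inequality (descent lemma)
  have hQ : ∀ x u : Eucl n, f u + c * ‖u - x‖ ^ 2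
      ≤ f x + ⟪f' x, u - x⟫ + ‖u - x‖ ^ 2 / (2 * γ) := by
    intro x u
    have hd := fbe_descent f f' Lf hf' hLip x u
    have h1 : c * ‖u - x‖ ^ 2 + (Lf : ℝ) / 2 * ‖u - x‖ ^ 2
        = ‖u - x‖ ^ 2 / (2 * γ) := by
      rw [hcdef]; ring
    linarith
  -- pointwise comparison on the EReal level
  have low : ∀ x u : Eucl n,
      ((f u + c * ‖u - x‖ ^ 2 : ℝ) : EReal) + g u
      ≤ ((f x + ⟪f' x, u - x⟫ + ‖u - x‖ ^ 2 / (2 * γ) : ℝ) : EReal) + g u := by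
    intro x u
    exact add_le_add_left (EReal.coe_le_coe_iff.mpr (hQ x u)) (g u)
  have low' : ∀ x u : Eucl n,
      ((f u : ℝ) : EReal) + g u
      ≤ ((f x + ⟪f' x, u - x⟫ + ‖u - x‖ ^ 2 / (2 * γ) : ℝ) : EReal) + g u := by
    intro x u
    refine le_trans ?_ (low x u)
    refine add_le_add_left (EReal.coe_le_coe_iff.mpr ?_) (g u)
    nlinarith [sq_nonneg ‖u - x‖, norm_nonneg (u - x)]
  -- F_γ x ≤ F x
  have le_F : ∀ x : Eucl n,
      (⨅ u : Eucl n, ((f x + ⟪f' x, u - x⟫ + ‖u - x‖ ^ 2 / (2 * γ) : ℝ) : EReal) + g u)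
      ≤ ((f x : ℝ) : EReal) + g x := by
    intro x
    refine le_trans (iInf_le _ x) ?_
    have : f x + ⟪f' x, x - x⟫ + ‖x - x‖ ^ 2 / (2 * γ) = f x := by
      simp [sub_self]
    rw [this]
  -- F_γ is never ⊥
  have ne_bot : ∀ x : Eucl n,
      (⨅ u : Eucl n, ((f x + ⟪f' x, u - x⟫ + ‖u - x‖ ^ 2 / (2 * γ) : ℝ) : EReal) + g u)
        ≠ ⊥ := by
    intro x
    obtain ⟨a, b, hab⟩ := fbe_exists_affine_minorant hproper hbot hlsc hconv
    set m : ℝ := f x + ⟪a, x⟫ + b - γ * ‖f' x + a‖ ^ 2 / 2 with hm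
    have hlb : (m : EReal)
        ≤ ⨅ u : Eucl n, ((f x + ⟪f' x, u - x⟫ + ‖u - x‖ ^ 2 / (2 * γ) : ℝ) : EReal) + g u := by
      refine le_iInf fun u => ?_
      have h1 : ((f x + ⟪f' x, u - x⟫ + ‖u - x‖ ^ 2 / (2 * γ) : ℝ) : EReal)
          + ((⟪a, u⟫ + b : ℝ) : EReal)
          ≤ ((f x + ⟪f' x, u - x⟫ + ‖u - x‖ ^ 2 / (2 * γ) : ℝ) : EReal) + g u :=
        add_le_add_right (hab u) _
      refine le_trans ?_ h1
      rw [← EReal.coe_add]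
      refine EReal.coe_le_coe_iff.mpr ?_
      -- real inequality
      set v : Eucl n := u - x with hv
      have hu : u = x + v := by rw [hv]; abel
      have hinner : ⟪a, u⟫ = ⟪a, x⟫ + ⟪a, v⟫ := by
        rw [hu, inner_add_right]
      have hw : ⟪f' x, v⟫ + ⟪a, v⟫ = ⟪f' x + a, v⟫ := (inner_add_left _ _ _).symm
      have hsq : (0:ℝ) ≤ ‖v + γ • (f' x + a)‖ ^ 2 := sq_nonneg _
      have hexp : ‖v + γ • (f' x + a)‖ ^ 2
          = ‖v‖ ^ 2 + 2 * (γ * ⟪v, f' x + a⟫) + γ ^ 2 * ‖f' x + a‖ ^ 2 := by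
        rw [norm_add_sq_real, real_inner_smul_right, norm_smul]
        rw [Real.norm_eq_abs, abs_of_pos hγ]
        ring
      have hkey : 0 ≤ ‖v‖ ^ 2 + 2 * γ * ⟪v, f' x + a⟫ + γ ^ 2 * ‖f' x + a‖ ^ 2 := by
        rw [hexp] at hsq; linarith
      have hdiv : (‖v‖ ^ 2 + 2 * γ * ⟪v, f' x + a⟫ + γ ^ 2 * ‖f' x + a‖ ^ 2) / (2 * γ)
          = ‖v‖ ^ 2 / (2 * γ) + ⟪v, f' x + a⟫ + γ * ‖f' x + a‖ ^ 2 / 2 := by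
        field_simp
      have h2 : 0 ≤ ‖v‖ ^ 2 / (2 * γ) + ⟪v, f' x + a⟫ + γ * ‖f' x + a‖ ^ 2 / 2 := by
        rw [← hdiv]
        exact div_nonneg hkey (by positivity)
      have hcomm : ⟪v, f' x + a⟫ = ⟪f' x + a, v⟫ := real_inner_comm _ _
      rw [hm, hinner]
      rw [hcomm] at h2
      linarith [hw ▸ h2]
    intro hbotx
    rw [hbotx] at hlb
    exact (EReal.coe_ne_bot m) (le_bot_iff.mp hlb)
  -- lower semicontinuity of F
  have hFlsc : LowerSemicontinuous fun z : Eucl n => ((f z : ℝ) : EReal) + g z := by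
    have h1 : LowerSemicontinuous fun z : Eucl n => ((f z : ℝ) : EReal) :=
      (continuous_coe_real_ereal.comp hf2.continuous).lowerSemicontinuous
    exact h1.add' hlsc fun z =>
      EReal.continuousAt_add (Or.inl (EReal.coe_ne_top _)) (Or.inl (EReal.coe_ne_bot _))
  -- main claim for the backward direction
  have key : ∀ x : Eucl n,
      (∀ y, (⨅ u : Eucl n, ((f x + ⟪f' x, u - x⟫ + ‖u - x‖ ^ 2 / (2 * γ) : ℝ) : EReal) + g u)
          ≤ (⨅ u : Eucl n, ((f y + ⟪f' y, u - y⟫ + ‖u - y‖ ^ 2 / (2 * γ) : ℝ) : EReal) + g u)) →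
      ((f x : ℝ) : EReal) + g x
        ≤ ⨅ u : Eucl n, ((f x + ⟪f' x, u - x⟫ + ‖u - x‖ ^ 2 / (2 * γ) : ℝ) : EReal) + g u := by
    intro x hmin
    by_cases htop : (⨅ u : Eucl n,
        ((f x + ⟪f' x, u - x⟫ + ‖u - x‖ ^ 2 / (2 * γ) : ℝ) : EReal) + g u) = ⊤
    · rw [htop]; exact le_top
    obtain ⟨r, hrdef⟩ : ∃ r : ℝ, r = (⨅ u : Eucl n,
        ((f x + ⟪f' x, u - x⟫ + ‖u - x‖ ^ 2 / (2 * γ) : ℝ) : EReal) + g u).toReal := ⟨_, rfl⟩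
    have hr : (⨅ u : Eucl n,
        ((f x + ⟪f' x, u - x⟫ + ‖u - x‖ ^ 2 / (2 * γ) : ℝ) : EReal) + g u) = (r : EReal) := by
      rw [hrdef]; exact (EReal.coe_toReal htop (ne_bot x)).symm
    rw [hr]
    by_contra hcon
    push_neg at hcon
    obtain ⟨q, hq1, hq2⟩ := EReal.lt_iff_exists_real_btwn.mp hcon
    have hq1' : r < q := by exact_mod_cast hq1
    -- lower semicontinuity gives a ball
    have hev : ∀ᶠ z in 𝓝 x, (q : EReal) < ((f z : ℝ) : EReal) + g z := hFlsc x (q : EReal) hq2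
    obtain ⟨δ, hδpos, hδ⟩ := Metric.eventually_nhds_iff.mp hev
    -- choose ε
    obtain ⟨ε, hε⟩ : ∃ ε : ℝ, ε = min ((q - r) / 2) (c * δ ^ 2 / 2) := ⟨_, rfl⟩
    have hεpos : 0 < ε := by
      rw [hε]
      apply lt_min
      · linarith
      · positivity
    -- extract an approximate minimizer
    have hlt : (⨅ u : Eucl n,
        ((f x + ⟪f' x, u - x⟫ + ‖u - x‖ ^ 2 / (2 * γ) : ℝ) : EReal) + g u)
        < ((r + ε : ℝ) : EReal) := by
      rw [hr]
      exact_mod_cast (by linarith : r < r + ε)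
    obtain ⟨u, hu⟩ := iInf_lt_iff.mp hlt
    -- g u is finite
    have hgu_ne_top : g u ≠ ⊤ := by
      intro htop'
      rw [htop', EReal.coe_add_top] at hu
      exact not_top_lt hu
    obtain ⟨t, ht⟩ : ∃ t : ℝ, t = (g u).toReal := ⟨_, rfl⟩
    have hgu : g u = (t : EReal) := by
      rw [ht]; exact (EReal.coe_toReal hgu_ne_top (hbot u)).symm
    rw [hgu, ← EReal.coe_add, EReal.coe_lt_coe_iff] at hu
    -- F u ≥ r
    have hFu : (r : EReal) ≤ ((f u : ℝ) : EReal) + g u := by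
      rw [← hr]
      exact le_trans (hmin u) (le_F u)
    rw [hgu, ← EReal.coe_add, EReal.coe_le_coe_iff] at hFu
    -- u is close to x
    have hclose : c * ‖u - x‖ ^ 2 < ε := by
      have := hQ x u
      linarith
    have hdist : dist u x < δ := by
      rw [dist_eq_norm]
      have h2 : ε ≤ c * δ ^ 2 / 2 := by rw [hε]; exact min_le_right _ _
      have h3 : c * ‖u - x‖ ^ 2 < c * δ ^ 2 / 2 := lt_of_lt_of_le hclose h2
      have h1 : ‖u - x‖ ^ 2 < δ ^ 2 := by
        by_contra hge
        push_neg at hge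
        have := mul_le_mul_of_nonneg_left hge hc.le
        linarith
      exact lt_of_pow_lt_pow_left₀ 2 hδpos.le h1
    have hqFu := hδ hdist
    rw [hgu, ← EReal.coe_add, EReal.coe_lt_coe_iff] at hqFu
    have h4 : ε ≤ (q - r) / 2 := by rw [hε]; exact min_le_left _ _
    have h5 := hQ x u
    have hcs : 0 ≤ c * ‖u - x‖ ^ 2 := mul_nonneg hc.le (sq_nonneg _)
    linarith
  constructor
  · intro x
    constructor
    · intro hmin y
      refine le_trans (le_F x) (le_iInf fun u => ?_)
      exact le_trans (hmin u) (low' y u)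
    · intro hmin y
      calc ((f x : ℝ) : EReal) + g x
          ≤ ⨅ u : Eucl n, ((f x + ⟪f' x, u - x⟫ + ‖u - x‖ ^ 2 / (2 * γ) : ℝ) : EReal) + g u :=
            key x hmin
        _ ≤ ⨅ u : Eucl n, ((f y + ⟪f' y, u - y⟫ + ‖u - y‖ ^ 2 / (2 * γ) : ℝ) : EReal) + g u :=
            hmin y
        _ ≤ ((f y : ℝ) : EReal) + g y := le_F y
  · apply le_antisymm
    · refine le_iInf fun x => le_iInf fun u => ?_
      exact le_trans (iInf_le _ u) (low' x u)
    · exact iInf_mono le_F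
end
end

section
/- The forward-backward envelope F_γ is continuously differentiable with gradient ∇F_γ(x) = (I - γ∇²f(x)) G_γ(x); consequently, for γ ∈ (0, 1/L_f) the stationary points of F_γ are exactly the minimizers of F = f + g. -/
open scoped RealInnerProductSpace
open Filter Topology

noncomputable section

lemma slope_aux {q : ℝ → ℝ} {a c : ℝ} (hq : HasDerivAt q a 0)
    (h : ∀ t ∈ Set.Ioc (0:ℝ) 1, t * c ≤ q t - q 0) : c ≤ a := by
  have hs := hasDerivAt_iff_tendsto_slope.mp hq
  have hs' : Tendsto (slope q 0) (𝓝[>] 0) (𝓝 a) :=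
    hs.mono_left (nhdsWithin_mono _ (fun t ht => ne_of_gt ht))
  refine ge_of_tendsto hs' ?_
  filter_upwards [Ioc_mem_nhdsGT_of_mem (Set.mem_Ico.2 ⟨le_refl (0:ℝ), one_pos⟩)] with t ht
  have ht0 : 0 < t := ht.1
  have := h t ht
  rw [slope_def_field, sub_zero, le_div_iff₀ ht0]
  linarith

lemma slope_aux' {q : ℝ → ℝ} {a c : ℝ} (hq : HasDerivAt q a 0)
    (h : ∀ t ∈ Set.Ioc (0:ℝ) 1, q t - q 0 ≤ t * c) : a ≤ c := by
  have key : ∀ t ∈ Set.Ioc (0:ℝ) 1, t * (-c) ≤ (-q) t - (-q) 0 := by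
    intro t ht
    have := h t ht
    simp only [Pi.neg_apply]
    nlinarith
  have := slope_aux hq.neg key
  linarith

lemma le_of_forall_Ioc {a b c : ℝ} (hb : 0 ≤ b) (h : ∀ t ∈ Set.Ioc (0:ℝ) 1, c ≤ a + t * b) : c ≤ a := by
  by_contra hlt
  push_neg at hlt
  have hca : 0 < c - a := by linarith
  set t := min 1 ((c - a) / (2 * (b + 1))) with ht
  have htpos : 0 < t := lt_min one_pos (div_pos hca (by positivity))
  have ht1 : t ≤ 1 := min_le_left _ _
  have h2 : t ≤ (c - a) / (2 * (b + 1)) := min_le_right _ _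
  have hb1 : (0:ℝ) < b + 1 := by linarith
  have h3 : t * b ≤ (c - a) / (2 * (b + 1)) * b := by nlinarith
  have hlt2 : (c - a) / (2 * (b + 1)) * b < c - a := by
    rw [div_mul_eq_mul_div, div_lt_iff₀ (by positivity)]
    nlinarith
  linarith [h t ⟨htpos, ht1⟩]

lemma hasDerivAt_comp_line {n : ℕ} {f : Eucl n → ℝ} {f' : Eucl n → Eucl n}
    (hf' : ∀ x, HasGradientAt f (f' x) x) (x d : Eucl n) :
    HasDerivAt (fun t : ℝ => f (x + t • d)) ⟪f' x, d⟫ 0 := by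
  have hc : HasDerivAt (fun t : ℝ => x + t • d) d 0 := by
    simpa using ((hasDerivAt_id (0:ℝ)).smul_const d).const_add x
  have hfd : HasFDerivAt f (InnerProductSpace.toDual ℝ (Eucl n) (f' x)) (x + (0:ℝ) • d) := by
    simpa using (hf' x).hasFDerivAt
  have h2 := hfd.comp_hasDerivAt (0:ℝ) hc
  simpa [Function.comp_def, InnerProductSpace.toDual_apply_apply] using h2

lemma prox_subgrad {n : ℕ} {γ : ℝ} {g : Eucl n → EReal} {p : Eucl n → Eucl n}
    (hγ : 0 < γ) (hg : ProperLscConvex g) (hp : IsProx γ g p) (hfin : ∀ y, g (p y) ≠ ⊤)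
    (z u : Eucl n) (hu : g u ≠ ⊤) :
    (g (p z)).toReal + ⟪z - p z, u - p z⟫ / γ ≤ (g u).toReal := by
  obtain ⟨hproper, hbot, hlsc, hconv⟩ := hg
  set w := p z with hw
  set gw := (g w).toReal with hgw
  set gu := (g u).toReal with hgu
  have hgwE : ((gw : ℝ) : EReal) = g w := EReal.coe_toReal (hfin z) (hbot w)
  have hguE : ((gu : ℝ) : EReal) = g u := EReal.coe_toReal hu (hbot u)
  set A := ⟪w - z, u - w⟫ with hA
  set B := ‖u - w‖ ^ 2 with hB
  have key : gw - gu ≤ A / γ := by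
    apply le_of_forall_Ioc (b := B / (2 * γ)) (by positivity)
    intro t ht
    have ht0 : (0:ℝ) < t := ht.1
    set ut := w + t • (u - w) with hut
    have hcomb : (1 - t) • w + t • u = ut := by
      rw [hut]; module
    have hconv' : g ut ≤ (((1 - t) * gw + t * gu : ℝ) : EReal) := by
      rw [EReal.coe_add, EReal.coe_mul, EReal.coe_mul, hgwE, hguE, ← hcomb]
      exact hconv w u (1 - t) t (by linarith [ht.2]) ht0.le (by ring)
    have hut_ne_top : g ut ≠ ⊤ := (lt_of_le_of_lt hconv' (EReal.coe_lt_top _)).ne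
    have hutE : (((g ut).toReal : ℝ) : EReal) = g ut := EReal.coe_toReal hut_ne_top (hbot ut)
    set gut := (g ut).toReal with hgut
    have hconvR : gut ≤ (1 - t) * gw + t * gu := by
      rw [← EReal.coe_le_coe_iff, hutE]; exact hconv'
    have hpz := hp z ut
    have hpzR : gw + ‖w - z‖ ^ 2 / (2 * γ) ≤ gut + ‖ut - z‖ ^ 2 / (2 * γ) := by
      rw [← EReal.coe_le_coe_iff, EReal.coe_add, EReal.coe_add, hgwE, hutE]
      exact hpz
    have hnorm : ‖ut - z‖ ^ 2 = ‖w - z‖ ^ 2 + 2 * (t * A) + t ^ 2 * B := by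
      have h1 : ut - z = (w - z) + t • (u - w) := by rw [hut]; abel
      rw [h1, norm_add_sq_real, real_inner_smul_right, norm_smul, mul_pow, Real.norm_eq_abs, sq_abs]
    have hexp : ‖ut - z‖ ^ 2 / (2 * γ) = ‖w - z‖ ^ 2 / (2 * γ) + t * (A / γ) + t * (t * (B / (2 * γ))) := by
      rw [hnorm]; field_simp
    have key2 : t * (gw - gu) ≤ t * (A / γ + t * (B / (2 * γ))) := by nlinarith
    exact le_of_mul_le_mul_left (by nlinarith) ht0
  have hAz : ⟪z - w, u - w⟫ = -A := by
    rw [show z - w = -(w - z) by abel, inner_neg_left, hA]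
  rw [hAz, neg_div]
  linarith

lemma prox_subgrad' {n : ℕ} {γ : ℝ} {g : Eucl n → EReal} {p : Eucl n → Eucl n}
    (hγ : 0 < γ) (hg : ProperLscConvex g) (hp : IsProx γ g p) (hfin : ∀ y, g (p y) ≠ ⊤)
    (z u : Eucl n) :
    (((g (p z)).toReal + ⟪z - p z, u - p z⟫ / γ : ℝ) : EReal) ≤ g u := by
  by_cases hu : g u = ⊤
  · rw [hu]; exact le_top
  · rw [← EReal.coe_toReal hu (hg.2.1 u), EReal.coe_le_coe_iff]
    exact prox_subgrad hγ hg hp hfin z u hu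

lemma firm_nonexp {n : ℕ} {γ : ℝ} {g : Eucl n → EReal} {p : Eucl n → Eucl n}
    (hγ : 0 < γ) (hg : ProperLscConvex g) (hp : IsProx γ g p) (hfin : ∀ y, g (p y) ≠ ⊤)
    (a b : Eucl n) : ‖p a - p b‖ ^ 2 ≤ ⟪a - b, p a - p b⟫ := by
  have h1 := prox_subgrad hγ hg hp hfin a (p b) (hfin b)
  have h2 := prox_subgrad hγ hg hp hfin b (p a) (hfin a)
  have hkey : ⟪a - p a, p b - p a⟫ + ⟪b - p b, p a - p b⟫ ≤ 0 := by
    have h3 : (⟪a - p a, p b - p a⟫ + ⟪b - p b, p a - p b⟫) / γ ≤ 0 := by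
      rw [add_div]; linarith
    have h4 : γ * ((⟪a - p a, p b - p a⟫ + ⟪b - p b, p a - p b⟫) / γ)
        = ⟪a - p a, p b - p a⟫ + ⟪b - p b, p a - p b⟫ := by field_simp
    nlinarith [mul_nonpos_of_nonneg_of_nonpos hγ.le h3]
  have hexpand : ⟪a - p a, p b - p a⟫ + ⟪b - p b, p a - p b⟫
      = ‖p a - p b‖ ^ 2 - ⟪a - b, p a - p b⟫ := by
    rw [← real_inner_self_eq_norm_sq]
    simp only [inner_sub_left, inner_sub_right]
    linarith [real_inner_comm (p a) (p b)]
  linarith [hkey, hexpand.symm.le]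

lemma prox_lip {n : ℕ} {γ : ℝ} {g : Eucl n → EReal} {p : Eucl n → Eucl n}
    (hγ : 0 < γ) (hg : ProperLscConvex g) (hp : IsProx γ g p) (hfin : ∀ y, g (p y) ≠ ⊤)
    (a b : Eucl n) : ‖p a - p b‖ ≤ ‖a - b‖ := by
  have h := firm_nonexp hγ hg hp hfin a b
  have h2 := real_inner_le_norm (a - b) (p a - p b)
  by_cases hz : p a - p b = 0
  · simp [show p a - p b = 0 from hz]
  · have : 0 < ‖p a - p b‖ := norm_pos_iff.2 hz
    nlinarith

lemma moreau_upper {n : ℕ} {γ : ℝ} {g : Eucl n → EReal} {p : Eucl n → Eucl n}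
    (hγ : 0 < γ) (hg : ProperLscConvex g) (hp : IsProx γ g p) (hfin : ∀ y, g (p y) ≠ ⊤)
    (z w : Eucl n) :
    (g (p w)).toReal + ‖p w - w‖ ^ 2 / (2 * γ)
      ≤ (g (p z)).toReal + ‖p z - z‖ ^ 2 / (2 * γ) + ⟪z - p z, w - z⟫ / γ
        + ‖w - z‖ ^ 2 / (2 * γ) := by
  have hbot := hg.2.1
  have hpz := hp w (p z)
  have hR : (g (p w)).toReal + ‖p w - w‖ ^ 2 / (2 * γ)
      ≤ (g (p z)).toReal + ‖p z - w‖ ^ 2 / (2 * γ) := by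
    rw [← EReal.coe_le_coe_iff, EReal.coe_add, EReal.coe_add,
      EReal.coe_toReal (hfin w) (hbot _), EReal.coe_toReal (hfin z) (hbot _)]
    exact hpz
  have hnorm : ‖p z - w‖ ^ 2 = ‖p z - z‖ ^ 2 + 2 * ⟪z - p z, w - z⟫ + ‖w - z‖ ^ 2 := by
    have h1 : p z - w = (p z - z) + (z - w) := by abel
    rw [h1, norm_add_sq_real,
      show z - w = -(w - z) by abel, show p z - z = -(z - p z) by abel,
      inner_neg_neg, norm_neg, norm_neg]
  rw [hnorm] at hR
  have h2 : (‖p z - z‖ ^ 2 + 2 * ⟪z - p z, w - z⟫ + ‖w - z‖ ^ 2) / (2 * γ)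
      = ‖p z - z‖ ^ 2 / (2 * γ) + ⟪z - p z, w - z⟫ / γ + ‖w - z‖ ^ 2 / (2 * γ) := by
    field_simp
  linarith [hR, h2.symm.le, h2.le]

lemma moreau_grad {n : ℕ} {γ : ℝ} {g : Eucl n → EReal} {p : Eucl n → Eucl n}
    (hγ : 0 < γ) (hg : ProperLscConvex g) (hp : IsProx γ g p) (hfin : ∀ y, g (p y) ≠ ⊤)
    (z₀ : Eucl n) :
    HasGradientAt (fun z => (g (p z)).toReal + ‖p z - z‖ ^ 2 / (2 * γ))
      (γ⁻¹ • (z₀ - p z₀)) z₀ := by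
  set φ : Eucl n → ℝ := fun z => (g (p z)).toReal + ‖p z - z‖ ^ 2 / (2 * γ) with hφ
  set v := z₀ - p z₀ with hv
  set C := 5 / (2 * γ) with hC
  have hCpos : 0 < C := by rw [hC]; positivity
  have key : ∀ w, |φ w - φ z₀ - ⟪γ⁻¹ • v, w - z₀⟫| ≤ C * ‖w - z₀‖ ^ 2 := by
    intro w
    have hsmul : ⟪γ⁻¹ • v, w - z₀⟫ = ⟪v, w - z₀⟫ / γ := by
      rw [real_inner_smul_left]; ring
    have h1 := moreau_upper hγ hg hp hfin z₀ w
    have h2 := moreau_upper hγ hg hp hfin w z₀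
    have hnr : ‖z₀ - w‖ = ‖w - z₀‖ := norm_sub_rev _ _
    have hlip := prox_lip hγ hg hp hfin w z₀
    have hdiff : ‖(w - p w) - v‖ ≤ 2 * ‖w - z₀‖ := by
      have : (w - p w) - v = (w - z₀) - (p w - p z₀) := by rw [hv]; abel
      rw [this]
      calc ‖(w - z₀) - (p w - p z₀)‖ ≤ ‖w - z₀‖ + ‖p w - p z₀‖ := norm_sub_le _ _
        _ ≤ 2 * ‖w - z₀‖ := by linarith
    have hcs : |⟪(w - p w) - v, w - z₀⟫| ≤ 2 * ‖w - z₀‖ ^ 2 := by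
      calc |⟪(w - p w) - v, w - z₀⟫| ≤ ‖(w - p w) - v‖ * ‖w - z₀‖ :=
            abs_real_inner_le_norm _ _
        _ ≤ 2 * ‖w - z₀‖ ^ 2 := by nlinarith [norm_nonneg (w - z₀)]
    have hrel : ⟪w - p w, z₀ - w⟫ = -⟪v, w - z₀⟫ - ⟪(w - p w) - v, w - z₀⟫ := by
      simp only [show z₀ - w = -(w - z₀) from by abel, inner_neg_right, inner_sub_left]
      ring
    rw [hsmul, abs_le]
    have hcs' := abs_le.1 hcs
    have hCsplit : C * ‖w - z₀‖ ^ 2 = 2 * ‖w - z₀‖ ^ 2 / γ + ‖w - z₀‖ ^ 2 / (2 * γ) := by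
      rw [hC]; field_simp; ring
    constructor
    · rw [hnr, hrel] at h2
      have hsplit2 : (-⟪v, w - z₀⟫ - ⟪(w - p w) - v, w - z₀⟫) / γ
          = -(⟪v, w - z₀⟫ / γ) - ⟪(w - p w) - v, w - z₀⟫ / γ := by ring
      have hDdiv : -(2 * ‖w - z₀‖ ^ 2) / γ ≤ ⟪(w - p w) - v, w - z₀⟫ / γ := by
        gcongr
        linarith [hcs'.1]
      rw [hsplit2] at h2
      have hneg : -(2 * ‖w - z₀‖ ^ 2) / γ = -(2 * ‖w - z₀‖ ^ 2 / γ) := by ring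
      rw [hneg] at hDdiv
      linarith
    · have : C * ‖w - z₀‖ ^ 2 ≥ ‖w - z₀‖ ^ 2 / (2 * γ) := by
        have : 0 ≤ 2 * ‖w - z₀‖ ^ 2 / γ := by positivity
        linarith
      linarith
  rw [hasGradientAt_iff_isLittleO, Asymptotics.isLittleO_iff]
  intro ε hε
  have hδ : 0 < ε / C := by positivity
  filter_upwards [Metric.ball_mem_nhds z₀ hδ] with w hw
  rw [Metric.mem_ball, dist_eq_norm] at hw
  have hkey := key w
  have h0 : 0 ≤ ‖w - z₀‖ := norm_nonneg _
  have hmul : ‖w - z₀‖ * C ≤ ε := (le_div_iff₀ hCpos).mp hw.le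
  have : C * ‖w - z₀‖ ^ 2 ≤ ε * ‖w - z₀‖ := by
    nlinarith [mul_le_mul_of_nonneg_right hmul h0]
  calc ‖φ w - φ z₀ - ⟪γ⁻¹ • v, w - z₀⟫‖ = |φ w - φ z₀ - ⟪γ⁻¹ • v, w - z₀⟫| := by
        rw [Real.norm_eq_abs]
    _ ≤ C * ‖w - z₀‖ ^ 2 := hkey
    _ ≤ ε * ‖w - z₀‖ := this

lemma sym_hess {n : ℕ} {f : Eucl n → ℝ} {f' : Eucl n → Eucl n}
    {f'' : Eucl n → Eucl n →L[ℝ] Eucl n}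
    (hf' : ∀ x, HasGradientAt f (f' x) x) (hf'' : ∀ x, HasFDerivAt f' (f'' x) x)
    (x u w : Eucl n) : ⟪f'' x u, w⟫ = ⟪f'' x w, u⟫ := by
  set M := (InnerProductSpace.toDual ℝ (Eucl n)).toContinuousLinearEquiv.toContinuousLinearMap
    with hM
  have hTclm : HasFDerivAt (fun y => M (f' y)) (M.comp (f'' x)) x :=
    M.hasFDerivAt.comp x (hf'' x)
  have hsym := second_derivative_symmetric (f := f) (f' := fun y => M (f' y))
    (fun y => (hf' y).hasFDerivAt) hTclm u w
  simpa [hM, ContinuousLinearMap.comp_apply, InnerProductSpace.toDual_apply_apply] using hsym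

lemma convex_grad_ineq {n : ℕ} {f : Eucl n → ℝ} {f' : Eucl n → Eucl n}
    (hf : ConvexOn ℝ Set.univ f) (hf' : ∀ x, HasGradientAt f (f' x) x) (x u : Eucl n) :
    f x + ⟪f' x, u - x⟫ ≤ f u := by
  have hq := hasDerivAt_comp_line hf' x (u - x)
  have key : ∀ t ∈ Set.Ioc (0:ℝ) 1,
      (fun t : ℝ => f (x + t • (u - x))) t - (fun t : ℝ => f (x + t • (u - x))) 0
        ≤ t * (f u - f x) := by
    intro t ht
    have hcv := hf.2 (Set.mem_univ x) (Set.mem_univ u)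
      (show (0:ℝ) ≤ 1 - t from by linarith [ht.2]) (le_of_lt ht.1)
      (show (1 - t) + t = 1 from by ring)
    simp only [smul_eq_mul] at hcv
    have hpt : x + t • (u - x) = (1 - t) • x + t • u := by module
    simp only [zero_smul, add_zero, hpt]
    nlinarith [hcv]
  have := slope_aux' hq key
  linarith

set_option maxHeartbeats 1000000 in
/-- `F_γ` is continuously differentiable with `∇F_γ(x) = (I - γ∇²f(x)) G_γ(x)`, and for
`γ ∈ (0, 1/L_f)` the stationary points of `F_γ` are exactly the minimizers of `F = f + g`. -/
theorem fbe_gradient_and_stationary {n : ℕ} (f : Eucl n → ℝ) (f' : Eucl n → Eucl n)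
    (f'' : Eucl n → Eucl n →L[ℝ] Eucl n)
    (g : Eucl n → EReal) (γ : ℝ) (p : Eucl n → Eucl n) (Lf : NNReal)
    (hf : ConvexOn ℝ Set.univ f) (hf2 : ContDiff ℝ 2 f)
    (hf' : ∀ x, HasGradientAt f (f' x) x)
    (hf'' : ∀ x, HasFDerivAt f' (f'' x) x)
    (hLip : LipschitzWith Lf f')
    (hg : ProperLscConvex g)
    (hγ : 0 < γ)
    (hp : IsProx γ g p)
    (hfin : ∀ y, g (p y) ≠ ⊤) :
    -- with `P x = prox_{γg}(x - γ∇f x)`, `G x = γ⁻¹(x - P x)` and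
    -- `F_γ x = f x + ⟪∇f x, P x - x⟫ + g (P x) + ‖P x - x‖²/(2γ)`:
    (∀ x : Eucl n, HasGradientAt
        (fun y => f y + ⟪f' y, p (y - γ • f' y) - y⟫
            + (g (p (y - γ • f' y))).toReal + ‖p (y - γ • f' y) - y‖ ^ 2 / (2 * γ))
        (γ⁻¹ • (x - p (x - γ • f' x))
          - γ • f'' x (γ⁻¹ • (x - p (x - γ • f' x)))) x) ∧
    Continuous (fun x : Eucl n =>
        γ⁻¹ • (x - p (x - γ • f' x)) - γ • f'' x (γ⁻¹ • (x - p (x - γ • f' x)))) ∧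
    (γ < 1 / Lf → ∀ x : Eucl n,
      (γ⁻¹ • (x - p (x - γ • f' x)) - γ • f'' x (γ⁻¹ • (x - p (x - γ • f' x))) = 0
        ↔ ∀ y, ((f x : ℝ) : EReal) + g x ≤ ((f y : ℝ) : EReal) + g y)) := by
  refine ⟨fun x => ?_, ?_, fun hγL x => ?_⟩
  · -- Part 1: gradient
      set φ : Eucl n → ℝ := fun z => (g (p z)).toReal + ‖p z - z‖ ^ 2 / (2 * γ) with hφdef
      have hfun : (fun y => f y + ⟪f' y, p (y - γ • f' y) - y⟫
                + (g (p (y - γ • f' y))).toReal + ‖p (y - γ • f' y) - y‖ ^ 2 / (2 * γ))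
          = fun y => f y - γ / 2 * ⟪f' y, f' y⟫ + φ (y - γ • f' y) := by
        funext y
        have hexp : ‖p (y - γ • f' y) - (y - γ • f' y)‖ ^ 2
            = ‖p (y - γ • f' y) - y‖ ^ 2 + 2 * (γ * ⟪f' y, p (y - γ • f' y) - y⟫)
              + γ ^ 2 * ⟪f' y, f' y⟫ := by
          rw [show p (y - γ • f' y) - (y - γ • f' y) = (p (y - γ • f' y) - y) + γ • f' y by abel,
            norm_add_sq_real, real_inner_smul_right, norm_smul, mul_pow, Real.norm_eq_abs, sq_abs,
            real_inner_comm (p (y - γ • f' y) - y), real_inner_self_eq_norm_sq]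
        simp only [hφdef]
        rw [hexp]
        field_simp
        ring
      rw [hfun]
      set z := x - γ • f' x with hz
      have hφF : HasFDerivAt φ (InnerProductSpace.toDual ℝ (Eucl n) (γ⁻¹ • (z - p z))) z :=
        (moreau_grad hγ hg hp hfin z).hasFDerivAt
      have hm : HasFDerivAt (fun y => y - γ • f' y)
          (ContinuousLinearMap.id ℝ (Eucl n) - γ • f'' x) x :=
        (hasFDerivAt_id x).sub ((hf'' x).const_smul γ)
      have hcomp := hφF.comp x hm
      have hinner := ((hf'' x).inner ℝ (hf'' x)).const_mul (γ / 2)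
      have hsum := (((hf' x).hasFDerivAt.sub hinner).add hcomp)
      rw [HasGradientAt]
      show HasFDerivAt _ _ _
      have hEq : (InnerProductSpace.toDual ℝ (Eucl n) (f' x) - (γ / 2) • ((fderivInnerCLM ℝ (f' x, f' x)).comp
            ((f'' x).prod (f'' x)))
          + (InnerProductSpace.toDual ℝ (Eucl n) (γ⁻¹ • (z - p z))).comp
              (ContinuousLinearMap.id ℝ (Eucl n) - γ • f'' x))
          = InnerProductSpace.toDual ℝ (Eucl n) (γ⁻¹ • (x - p z) - γ • f'' x (γ⁻¹ • (x - p z))) := by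
        apply ContinuousLinearMap.ext
        intro w
        have hv : γ⁻¹ • (z - p z) = γ⁻¹ • (x - p z) - f' x := by
          rw [hz, show x - γ • f' x - p (x - γ • f' x) = (x - p (x - γ • f' x)) - γ • f' x by abel,
            smul_sub, smul_smul, inv_mul_cancel₀ hγ.ne', one_smul]
        set G := γ⁻¹ • (x - p z) with hG
        simp only [ContinuousLinearMap.add_apply, ContinuousLinearMap.sub_apply,
          ContinuousLinearMap.smul_apply, ContinuousLinearMap.comp_apply,
          ContinuousLinearMap.prod_apply, fderivInnerCLM_apply, InnerProductSpace.toDual_apply_apply,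
          ContinuousLinearMap.coe_id', id_eq, hv, smul_eq_mul]
        simp only [inner_sub_left, inner_sub_right, inner_smul_right, real_inner_smul_left]
        have s1 := sym_hess hf' hf'' x w G
        have s2 := sym_hess hf' hf'' x w (f' x)
        have c1 := real_inner_comm (f'' x w) G
        have c2 := real_inner_comm (f'' x w) (f' x)
        have c3 := real_inner_comm (f'' x G) w
        have c4 := real_inner_comm (f'' x (f' x)) w
        linear_combination (γ/2) * c2 - γ * c1 - γ * s1
      rw [← hEq]
      exact hsum
  · -- Part 2: continuity
      have hf'c : Continuous f' := hLip.continuous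
      have hpc : Continuous p := by
        have hl : LipschitzWith 1 p := LipschitzWith.of_dist_le_mul fun a b => by
          rw [dist_eq_norm, dist_eq_norm, NNReal.coe_one, one_mul]
          exact prox_lip hγ hg hp hfin a b
        exact hl.continuous
      have hGc : Continuous (fun x : Eucl n => γ⁻¹ • (x - p (x - γ • f' x))) :=
        (continuous_id.sub (hpc.comp (continuous_id.sub (hf'c.const_smul γ)))).const_smul γ⁻¹
      have hf'cd : ContDiff ℝ 1 f' := by
        have h1 : ContDiff ℝ 1 (fderiv ℝ f) := hf2.fderiv_right (by norm_num)
        have h2 : f' = fun y => (InnerProductSpace.toDual ℝ (Eucl n)).symm (fderiv ℝ f y) := by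
          funext y
          rw [(hf' y).hasFDerivAt.fderiv]
          simp
        rw [h2]
        exact (InnerProductSpace.toDual ℝ (Eucl n)).symm.contDiff.comp h1
      have hf''c : Continuous f'' := by
        have h3 : f'' = fun y => fderiv ℝ f' y := by
          funext y; exact ((hf'' y).fderiv).symm
        rw [h3]
        exact hf'cd.continuous_fderiv one_ne_zero
      exact hGc.sub ((hf''c.clm_apply hGc).const_smul γ)
  · -- Part 3: stationarity
      have hbot := hg.2.1
      set z := x - γ • f' x with hzdef
      set w := p z with hwdef
      set v : Eucl n := γ⁻¹ • (x - w) with hvdef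
      have hLf0 : (0:ℝ) < Lf := by
        by_contra hc
        push_neg at hc
        have h0 : (Lf:ℝ) = 0 := le_antisymm hc Lf.coe_nonneg
        rw [h0] at hγL
        simp at hγL
        linarith
      have hγLf : γ * Lf < 1 := by
        rw [lt_div_iff₀ hLf0] at hγL
        exact hγL
      constructor
      · intro h0
        have hvz : v = 0 := by
          by_contra hv
          have hop : ‖f'' x‖ ≤ Lf := (hf'' x).le_of_lipschitz hLip
          have hnorm : ‖f'' x v‖ ≤ Lf * ‖v‖ :=
            le_trans ((f'' x).le_opNorm v) (by gcongr)
          have hveq : v = γ • f'' x v := by rwa [sub_eq_zero] at h0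
          have hneq : ‖v‖ = γ * ‖f'' x v‖ := by
            nth_rewrite 1 [hveq]
            rw [norm_smul, Real.norm_eq_abs, abs_of_pos hγ]
          have hvpos : 0 < ‖v‖ := norm_pos_iff.2 hv
          nlinarith [norm_nonneg (f'' x v)]
        have hxw : x = w := by
          rw [hvdef, smul_eq_zero] at hvz
          rcases hvz with h | h
          · exact absurd h (inv_ne_zero hγ.ne')
          · rwa [sub_eq_zero] at h
        have hgx_ne_top : g x ≠ ⊤ := by rw [hxw]; exact hfin z
        intro y
        by_cases hgy : g y = ⊤
        · rw [hgy, EReal.add_top_of_ne_bot (EReal.coe_ne_bot _)]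
          exact le_top
        · rw [← EReal.coe_toReal hgy (hbot y), ← EReal.coe_toReal hgx_ne_top (hbot x),
            ← EReal.coe_add, ← EReal.coe_add, EReal.coe_le_coe_iff]
          have hsubR := prox_subgrad hγ hg hp hfin z y hgy
          have hzw : ⟪z - w, y - w⟫ / γ = -⟪f' x, y - x⟫ := by
            have h1 : z - w = -(γ • f' x) := by rw [hzdef, ← hxw]; abel
            rw [h1, ← hxw, inner_neg_left, real_inner_smul_left]
            field_simp
          rw [hzw] at hsubR
          have hfgrad := convex_grad_ineq hf hf' x y
          have hgww : (g w).toReal = (g x).toReal := by rw [hxw]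
          linarith
      · intro hmin
        have hgx_ne_top : g x ≠ ⊤ := by
          obtain ⟨x₀, hx₀⟩ := hg.1
          intro htop
          have hm := hmin x₀
          rw [htop, EReal.add_top_of_ne_bot (EReal.coe_ne_bot _), top_le_iff] at hm
          apply hx₀
          by_contra hne
          rw [← EReal.coe_toReal hne (hbot x₀), ← EReal.coe_add] at hm
          exact EReal.coe_ne_top _ hm
        have hgxE : (((g x).toReal : ℝ) : EReal) = g x := EReal.coe_toReal hgx_ne_top (hbot x)
        have hgwE : (((g w).toReal : ℝ) : EReal) = g w := EReal.coe_toReal (hfin z) (hbot w)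
        set gx := (g x).toReal with hgx
        set gw := (g w).toReal with hgw
        have hd1 := prox_subgrad hγ hg hp hfin z x hgx_ne_top
        have hd2 : gx - gw ≤ ⟪f' x, w - x⟫ := by
          apply slope_aux (hasDerivAt_comp_line hf' x (w - x))
          intro t ht
          set ut := x + t • (w - x) with hut
          have hcomb : (1 - t) • x + t • w = ut := by rw [hut]; module
          have hconv' : g ut ≤ (((1 - t) * gx + t * gw : ℝ) : EReal) := by
            rw [EReal.coe_add, EReal.coe_mul, EReal.coe_mul, hgxE, hgwE, ← hcomb]
            exact hg.2.2.2 x w (1 - t) t (by linarith [ht.2]) ht.1.le (by ring)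
          have hm := le_trans (hmin ut) (add_le_add le_rfl hconv')
          have hmR : f x + gx ≤ f ut + ((1 - t) * gx + t * gw) := by
            rw [← EReal.coe_le_coe_iff, EReal.coe_add, EReal.coe_add, hgxE]
            exact hm
          simp only [zero_smul, add_zero]
          nlinarith [hmR]
        have hzwx : ⟪z - w, x - w⟫ = ‖x - w‖ ^ 2 - γ * ⟪f' x, x - w⟫ := by
          have h1 : z - w = (x - w) - γ • f' x := by rw [hzdef]; abel
          rw [h1, inner_sub_left, real_inner_smul_left, real_inner_self_eq_norm_sq]
        have hfl : ⟪f' x, w - x⟫ = -⟪f' x, x - w⟫ := by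
          rw [show w - x = -(x - w) by abel, inner_neg_right]
        have hkey : ‖x - w‖ ^ 2 / γ ≤ 0 := by
          rw [hzwx] at hd1
          have : (‖x - w‖ ^ 2 - γ * ⟪f' x, x - w⟫) / γ = ‖x - w‖ ^ 2 / γ - ⟪f' x, x - w⟫ := by
            field_simp
          rw [this] at hd1
          linarith [hd1, hd2, hfl.le, hfl.ge]
        have hxw : x - w = 0 := by
          have h2 : ‖x - w‖ ^ 2 ≤ 0 := by
            by_contra hcc
            push_neg at hcc
            have := div_pos hcc hγ
            linarith
          have : ‖x - w‖ = 0 := by nlinarith [norm_nonneg (x - w)]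
          rwa [norm_eq_zero] at this
        rw [hvdef, hxw]
        simp
end
end

section
/- Let Q be a symmetric positive semidefinite n×n matrix with μ = λ_min(Q), L = λ_max(Q). Then λ_min(Q(I - γQ)) = μ(1 - γμ) if 0 < γ ≤ 1/(L+μ), and λ_min(Q(I - γQ)) = L(1 - γL) if 1/(L+μ) ≤ γ < 1/L. -/
noncomputable section

/-- For `Q` symmetric psd with `μ = λ_min(Q)`, `L = λ_max(Q)`:
`λ_min(Q(I - γQ)) = μ(1 - γμ)` if `0 < γ ≤ 1/(L+μ)`, and
`λ_min(Q(I - γQ)) = L(1 - γL)` if `1/(L+μ) ≤ γ < 1/L`. -/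
theorem lambda_min_Q_I_sub_gammaQ {n : ℕ} (Q : Matrix (Fin n) (Fin n) ℝ) (γ μ L : ℝ)
    (hQ : Q.PosSemidef)
    (hμ : IsLeast (spectrum ℝ Q) μ)
    (hL : IsGreatest (spectrum ℝ Q) L) :
    (0 < γ → γ ≤ 1 / (L + μ) →
      IsLeast (spectrum ℝ (Q * (1 - γ • Q))) (μ * (1 - γ * μ))) ∧
    (1 / (L + μ) ≤ γ → γ < 1 / L →
      IsLeast (spectrum ℝ (Q * (1 - γ • Q))) (L * (1 - γ * L))) := by
  have hsa : IsSelfAdjoint Q := hQ.1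
  have hspec : spectrum ℝ (Q * (1 - γ • Q)) = (fun x : ℝ => x * (1 - γ * x)) '' spectrum ℝ Q := by
    have h1 : Q * (1 - γ • Q) = cfc (fun x : ℝ => x * (1 - γ * x)) Q := by
      rw [cfc_mul .., cfc_id' ℝ Q, cfc_sub .., cfc_const_one ℝ Q, cfc_const_mul_id γ Q]
    rw [h1, cfc_map_spectrum ..]
  have hμ0 : 0 ≤ μ := by
    have h := hμ.1
    rw [Matrix.IsHermitian.spectrum_real_eq_range_eigenvalues hQ.1] at h
    obtain ⟨i, hi⟩ := h
    exact hi ▸ hQ.eigenvalues_nonneg i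
  have hμL : μ ≤ L := hL.2 hμ.1
  constructor
  · intro hγ hγ'
    have hLμpos : 0 < L + μ := by
      by_contra h
      push_neg at h
      have h0 : L + μ = 0 := le_antisymm h (by linarith)
      rw [h0] at hγ'
      simp at hγ'
      linarith
    have hγLμ : γ * (L + μ) ≤ 1 := by
      rw [le_div_iff₀ hLμpos] at hγ'
      linarith
    rw [hspec]
    refine ⟨⟨μ, hμ.1, rfl⟩, ?_⟩
    rintro y ⟨x, hx, rfl⟩
    have hxμ : μ ≤ x := hμ.2 hx
    have hxL : x ≤ L := hL.2 hx
    have h2 : 0 ≤ 1 - γ * (x + μ) := by nlinarith [hγ.le]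
    show μ * (1 - γ * μ) ≤ x * (1 - γ * x)
    nlinarith [mul_nonneg (sub_nonneg.2 hxμ) h2]
  · intro hγ hγ'
    have hL0 : 0 < L := by
      rcases (hμ0.trans hμL).lt_or_eq with h | h
      · exact h
      · exfalso
        have hμ0' : μ = 0 := le_antisymm (h ▸ hμL) hμ0
        rw [← h] at hγ'
        rw [← h, hμ0'] at hγ
        simp at hγ hγ'
        linarith
    have hγ0 : 0 ≤ γ := le_trans (by positivity) hγ
    have hγLμ : 1 ≤ γ * (L + μ) := by
      rw [div_le_iff₀ (by linarith : (0:ℝ) < L + μ)] at hγ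
      linarith
    rw [hspec]
    refine ⟨⟨L, hL.1, rfl⟩, ?_⟩
    rintro y ⟨x, hx, rfl⟩
    have hxμ : μ ≤ x := hμ.2 hx
    have hxL : x ≤ L := hL.2 hx
    have h2 : 0 ≤ γ * (x + L) - 1 := by nlinarith
    show L * (1 - γ * L) ≤ x * (1 - γ * x)
    nlinarith [mul_nonneg (sub_nonneg.2 hxL) h2]
end
end

section
/- For any γ ∈ (0, 1/L_f] and any x ∈ R^n, ‖G_γ(x)‖² ≥ 2μ_f (F(P_γ(x)) - F_⋆), where F_⋆ = inf F. -/
open scoped RealInnerProductSpace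
open Filter Topology

noncomputable section

/-- Mean value bound: `f q ≤ f x + ⟪∇f x, q - x⟫ + L ‖q - x‖²`. -/
theorem descent_aux {n : ℕ} (f : Eucl n → ℝ) (f' : Eucl n → Eucl n) (Lf : NNReal)
    (hf' : ∀ x, HasGradientAt f (f' x) x) (hLip : LipschitzWith Lf f')
    (x q : Eucl n) :
    f q ≤ f x + ⟪f' x, q - x⟫ + Lf * ‖q - x‖ ^ 2 := by
  set φ : Eucl n →L[ℝ] ℝ := (InnerProductSpace.toDual ℝ (Eucl n)) (f' x) with hφ
  have key : ‖f q - f x - φ (q - x)‖ ≤ ((Lf : ℝ) * ‖q - x‖) * ‖q - x‖ := by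
    apply Convex.norm_image_sub_le_of_norm_hasFDerivWithin_le'
      (f' := fun z => (InnerProductSpace.toDual ℝ (Eucl n)) (f' z))
      (fun z _ => (hf' z).hasFDerivAt.hasFDerivWithinAt) ?_ (convex_segment x q)
      (left_mem_segment ℝ x q) (right_mem_segment ℝ x q)
    intro z hz
    obtain ⟨a, b, ha, hb, hab, rfl⟩ := hz
    have h1 : ‖(InnerProductSpace.toDual ℝ (Eucl n)) (f' (a • x + b • q)) - φ‖
        = ‖f' (a • x + b • q) - f' x‖ := by
      rw [hφ, ← map_sub, (InnerProductSpace.toDual ℝ (Eucl n)).norm_map]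
    rw [h1]
    have h2 := hLip.dist_le_mul (a • x + b • q) x
    rw [dist_eq_norm] at h2
    have h3 : a • x + b • q - x = b • (q - x) := by
      have : a = 1 - b := by linarith
      rw [this]; module
    have h4 : ‖a • x + b • q - x‖ ≤ ‖q - x‖ := by
      rw [h3, norm_smul, Real.norm_eq_abs, abs_of_nonneg hb]
      nlinarith [norm_nonneg (q - x)]
    calc ‖f' (a • x + b • q) - f' x‖ ≤ Lf * ‖a • x + b • q - x‖ := h2
      _ ≤ Lf * ‖q - x‖ := mul_le_mul_of_nonneg_left h4 Lf.coe_nonneg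
  have hφval : φ (q - x) = ⟪f' x, q - x⟫ := rfl
  rw [hφval] at key
  have := abs_le.mp (by rwa [Real.norm_eq_abs] at key)
  nlinarith [this.2]

set_option maxHeartbeats 1000000 in
/-- For `γ ∈ (0, 1/L_f]`: `‖G_γ(x)‖² ≥ 2μ_f (F(P_γ(x)) - F_⋆)`. -/
theorem grad_mapping_lower_bound {n : ℕ} (f : Eucl n → ℝ) (f' : Eucl n → Eucl n)
    (g : Eucl n → EReal) (γ μ : ℝ) (p : Eucl n → Eucl n) (Lf : NNReal) (xstar : Eucl n)
    (hμ0 : 0 < μ)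
    (hsc : ∀ x y : Eucl n, f x + ⟪f' x, y - x⟫ + μ / 2 * ‖y - x‖ ^ 2 ≤ f y)
    (hf' : ∀ x, HasGradientAt f (f' x) x)
    (hLip : LipschitzWith Lf f')
    (hg : ProperLscConvex g)
    (hγ : 0 < γ) (hγL : γ ≤ 1 / Lf)
    (hp : IsProx γ g p)
    (hstar : ∀ y, ((f xstar : ℝ) : EReal) + g xstar ≤ ((f y : ℝ) : EReal) + g y)
    (x : Eucl n) :
    ((2 * μ : ℝ) : EReal)
        * ((((f (p (x - γ • f' x)) : ℝ) : EReal) + g (p (x - γ • f' x)))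
            - (((f xstar : ℝ) : EReal) + g xstar))
      ≤ ((‖γ⁻¹ • (x - p (x - γ • f' x))‖ ^ 2 : ℝ) : EReal) := by
  obtain ⟨⟨x₀, hx₀⟩, hgbot, hglsc, hgconv⟩ := hg
  set y : Eucl n := x - γ • f' x with hy
  set q : Eucl n := p y with hqdef
  -- finiteness of g xstar
  have hgs_top : g xstar ≠ ⊤ := by
    intro h
    have h1 := hstar x₀
    rw [h] at h1
    have : ((f xstar : ℝ) : EReal) + ⊤ = ⊤ := by
      rw [EReal.add_top_iff_ne_bot]; exact EReal.coe_ne_bot _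
    rw [this] at h1
    have h2 : ((f x₀ : ℝ) : EReal) + g x₀ < ⊤ :=
      EReal.add_lt_top (EReal.coe_ne_top _) hx₀
    exact absurd (top_le_iff.mp h1) (ne_of_lt h2)
  set gs : ℝ := (g xstar).toReal with hgsdef
  have hgs : g xstar = (gs : EReal) := (EReal.coe_toReal hgs_top (hgbot xstar)).symm
  -- finiteness of g q
  have hgq_top : g q ≠ ⊤ := by
    intro h
    have h1 := hp y xstar
    rw [← hqdef, h] at h1
    have : (⊤ : EReal) + ((‖q - y‖ ^ 2 / (2 * γ) : ℝ) : EReal) = ⊤ := by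
      rw [EReal.top_add_iff_ne_bot]; exact EReal.coe_ne_bot _
    rw [this] at h1
    have h2 : g xstar + ((‖xstar - y‖ ^ 2 / (2 * γ) : ℝ) : EReal) < ⊤ := by
      rw [hgs]; exact EReal.add_lt_top (EReal.coe_ne_top _) (EReal.coe_ne_top _)
    exact absurd (top_le_iff.mp h1) (ne_of_lt h2)
  set gq : ℝ := (g q).toReal with hgqdef
  have hgq : g q = (gq : EReal) := (EReal.coe_toReal hgq_top (hgbot q)).symm
  have h2γ : (0:ℝ) < 2 * γ := by linarith
  -- scalar abbreviations
  set w : Eucl n := f' x with hw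
  set A1 : ℝ := ⟪w, q - x⟫ with hA1
  set A2 : ℝ := ⟪w, xstar - x⟫ with hA2
  set A3 : ℝ := ⟪q - x, xstar - x⟫ with hA3
  set N1 : ℝ := ‖q - x‖ ^ 2 with hN1
  set N2 : ℝ := ‖xstar - x‖ ^ 2 with hN2
  have hqy : q - y = (q - x) + γ • w := by rw [hy]; abel
  have hI : ⟪q - y, xstar - q⟫ = A3 - N1 + γ * A2 - γ * A1 := by
    have hsq : xstar - q = (xstar - x) - (q - x) := by abel
    have e1 : ⟪q - y, xstar - q⟫ = ⟪q - x, xstar - q⟫ + γ * ⟪w, xstar - q⟫ := by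
      rw [hqy, inner_add_left, real_inner_smul_left]
    have e2 : ⟪q - x, xstar - q⟫ = A3 - N1 := by
      rw [hsq, inner_sub_right, hA3, hN1, real_inner_self_eq_norm_sq]
    have e3 : ⟪w, xstar - q⟫ = A2 - A1 := by rw [hsq, inner_sub_right, hA2, hA1]
    rw [e1, e2, e3]; ring
  -- Step A: prox subgradient inequality
  have hA : gq ≤ gs + (A3 - N1 + γ * A2 - γ * A1) / γ := by
    rw [← hI]
    have hkey : ∀ ε : ℝ, 0 < ε → gq ≤ gs + ⟪q - y, xstar - q⟫ / γ + ε := by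
      intro ε hε
      set b : Eucl n := xstar - q with hb
      set t : ℝ := min 1 (ε * (2 * γ) / (‖b‖ ^ 2 + 1)) with ht
      have hbpos : (0:ℝ) < ‖b‖ ^ 2 + 1 := by positivity
      have ht0 : 0 < t := by
        apply lt_min one_pos
        positivity
      have ht1 : t ≤ 1 := min_le_left _ _
      have hconv := hgconv q xstar (1 - t) t (by linarith) (le_of_lt ht0) (by ring)
      rw [hgq, hgs] at hconv
      have hconv' : g ((1 - t) • q + t • xstar) ≤ (((1 - t) * gq + t * gs : ℝ) : EReal) := by
        rw [EReal.coe_add, EReal.coe_mul, EReal.coe_mul]; exact hconv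
      have hprox := hp y ((1 - t) • q + t • xstar)
      rw [← hqdef, hgq] at hprox
      have hchain : ((gq + ‖q - y‖ ^ 2 / (2 * γ) : ℝ) : EReal)
          ≤ (((1 - t) * gq + t * gs + ‖(1 - t) • q + t • xstar - y‖ ^ 2 / (2 * γ) : ℝ) : EReal) := by
        rw [EReal.coe_add, EReal.coe_add]
        calc ((gq : ℝ) : EReal) + ((‖q - y‖ ^ 2 / (2 * γ) : ℝ) : EReal)
            ≤ g ((1 - t) • q + t • xstar)
              + ((‖(1 - t) • q + t • xstar - y‖ ^ 2 / (2 * γ) : ℝ) : EReal) := hprox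
          _ ≤ (((1 - t) * gq + t * gs : ℝ) : EReal)
              + ((‖(1 - t) • q + t • xstar - y‖ ^ 2 / (2 * γ) : ℝ) : EReal) :=
              add_le_add_left hconv' _
      have hreal := EReal.coe_le_coe_iff.mp hchain
      have hvec : (1 - t) • q + t • xstar - y = (q - y) + t • b := by
        rw [hb]; module
      rw [hvec, norm_add_sq_real, real_inner_smul_right, norm_smul,
        Real.norm_eq_abs, abs_of_pos ht0, mul_pow] at hreal
      -- multiply out by 2γ
      have hrm := mul_le_mul_of_nonneg_right hreal h2γ.le
      rw [add_mul, div_mul_cancel₀ _ (ne_of_gt h2γ), add_mul, add_mul,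
        div_mul_cancel₀ _ (ne_of_gt h2γ)] at hrm
      have hstep2 : t * ((2 * γ) * (gq - gs)) ≤ t * (2 * ⟪q - y, b⟫ + t * ‖b‖ ^ 2) := by
        nlinarith [hrm]
      have hstep3 : (2 * γ) * (gq - gs) ≤ 2 * ⟪q - y, b⟫ + t * ‖b‖ ^ 2 :=
        (mul_le_mul_iff_right₀ ht0).mp hstep2
      have h8 : t * ‖b‖ ^ 2 ≤ ε * (2 * γ) := by
        have h9 : t ≤ ε * (2 * γ) / (‖b‖ ^ 2 + 1) := min_le_right _ _
        calc t * ‖b‖ ^ 2 ≤ (ε * (2 * γ) / (‖b‖ ^ 2 + 1)) * ‖b‖ ^ 2 :=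
              mul_le_mul_of_nonneg_right h9 (sq_nonneg _)
          _ ≤ ε * (2 * γ) := by
              rw [div_mul_eq_mul_div, div_le_iff₀ hbpos]
              nlinarith [sq_nonneg ‖b‖]
      -- conclude
      have h10 : (2 * γ) * (gq - gs) ≤ 2 * ⟪q - y, b⟫ + ε * (2 * γ) := by linarith
      have h11 : gq - gs ≤ ⟪q - y, b⟫ / γ + ε := by
        rw [div_add' _ _ _ (ne_of_gt hγ), le_div_iff₀ hγ]
        nlinarith [h10]
      linarith
    by_contra hcon
    push_neg at hcon
    have := hkey ((gq - (gs + ⟪q - y, xstar - q⟫ / γ)) / 2) (by linarith)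
    linarith
  -- Step B: descent
  have hB : f q ≤ f x + A1 + Lf * N1 := by
    rw [hA1, hN1, hw]
    exact descent_aux f f' Lf hf' hLip x q
  -- Step C: strong convexity
  have hC : f x + A2 + μ / 2 * N2 ≤ f xstar := hsc x xstar
  have hL : γ * (Lf : ℝ) ≤ 1 := by
    rcases eq_or_lt_of_le (Lf.coe_nonneg) with h | h
    · rw [← h]; linarith
    · rw [le_div_iff₀ h] at hγL; linarith
  set r : ℝ := γ⁻¹ with hr
  have hγr : γ * r = 1 := by rw [hr]; field_simp
  have h5 : 0 ≤ r ^ 2 * N1 - 2 * r * μ * A3 + μ ^ 2 * N2 := by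
    have h0 : (0:ℝ) ≤ ‖r • (q - x) - μ • (xstar - x)‖ ^ 2 := sq_nonneg _
    rw [norm_sub_sq_real, real_inner_smul_left, real_inner_smul_right,
      norm_smul, norm_smul, Real.norm_eq_abs, Real.norm_eq_abs, mul_pow, mul_pow,
      sq_abs, sq_abs, ← hA3, ← hN1, ← hN2] at h0
    linarith
  have hGnorm : ‖γ⁻¹ • (x - q)‖ ^ 2 = r ^ 2 * N1 := by
    rw [norm_smul, Real.norm_eq_abs, mul_pow, sq_abs, ← hr, norm_sub_rev, ← hN1]
  have hfinal : 2 * μ * ((f q + gq) - (f xstar + gs)) ≤ r ^ 2 * N1 := by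
    have hA' : γ * gq ≤ γ * gs + (A3 - N1 + γ * A2 - γ * A1) := by
      have hmono := mul_le_mul_of_nonneg_left hA (le_of_lt hγ)
      calc γ * gq ≤ γ * (gs + (A3 - N1 + γ * A2 - γ * A1) / γ) := hmono
        _ = γ * gs + (A3 - N1 + γ * A2 - γ * A1) := by field_simp
    have hN1nn : (0:ℝ) ≤ N1 := by rw [hN1]; positivity
    have hN2nn : (0:ℝ) ≤ N2 := by rw [hN2]; positivity
    have h6 : γ * ((f q + gq) - (f xstar + gs)) ≤ A3 - γ * (μ / 2) * N2 := by
      nlinarith [hA', hL, hN1nn, mul_le_mul_of_nonneg_left hB (le_of_lt hγ),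
        mul_le_mul_of_nonneg_left hC (le_of_lt hγ)]
    have h7 := mul_le_mul_of_nonneg_left h6 (by positivity : (0:ℝ) ≤ 2 * μ * r)
    have e1 : 2 * μ * r * (γ * ((f q + gq) - (f xstar + gs)))
        = 2 * μ * ((f q + gq) - (f xstar + gs)) := by
      rw [show 2 * μ * r * (γ * ((f q + gq) - (f xstar + gs)))
          = (γ * r) * (2 * μ * ((f q + gq) - (f xstar + gs))) from by ring, hγr, one_mul]
    have e2 : 2 * μ * r * (A3 - γ * (μ / 2) * N2) = 2 * μ * r * A3 - μ ^ 2 * N2 := by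
      rw [show 2 * μ * r * (A3 - γ * (μ / 2) * N2)
          = 2 * μ * r * A3 - (γ * r) * (μ ^ 2 * N2) from by ring, hγr, one_mul]
    rw [e1, e2] at h7
    linarith
  rw [hgq, hgs, hGnorm]
  calc ((2 * μ : ℝ) : EReal)
        * ((((f q : ℝ) : EReal) + (gq : EReal)) - (((f xstar : ℝ) : EReal) + (gs : EReal)))
      = (((2 * μ) * ((f q + gq) - (f xstar + gs)) : ℝ) : EReal) := by
        rw [← EReal.coe_add, ← EReal.coe_add, ← EReal.coe_sub, ← EReal.coe_mul]
    _ ≤ ((r ^ 2 * N1 : ℝ) : EReal) := EReal.coe_le_coe_iff.mpr hfinal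
end
end

section
/- For any x ∈ R^n, any minimizer x_⋆ of F = f + g, and any γ ∈ (0, 1/L_f]: F(P_γ(x)) - F(x_⋆) ≤ (1/(2γ))(1 - γμ_f)‖x - x_⋆‖². -/
open scoped RealInnerProductSpace
open Filter Topology

noncomputable section

lemma descent_lemma {n : ℕ} (f : Eucl n → ℝ) (f' : Eucl n → Eucl n) (Lf : NNReal)
    (hf' : ∀ x, HasGradientAt f (f' x) x) (hLip : LipschitzWith Lf f') (x y : Eucl n) :
    f y ≤ f x + ⟪f' x, y - x⟫ + (Lf : ℝ) / 2 * ‖y - x‖ ^ 2 := by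
  set v := y - x with hv
  set ψ : ℝ → ℝ := fun t => f (x + t • v) - t * ⟪f' x, v⟫ - (Lf : ℝ) * ‖v‖ ^ 2 * t ^ 2 / 2
    with hψ
  have hc : ∀ t : ℝ, HasDerivAt (fun s : ℝ => x + s • v) v t := by
    intro t
    simpa using (HasDerivAt.const_add x ((hasDerivAt_id t).smul_const v))
  have hder : ∀ t : ℝ, HasDerivAt ψ
      (⟪f' (x + t • v), v⟫ - ⟪f' x, v⟫ - (Lf : ℝ) * ‖v‖ ^ 2 * t) t := by
    intro t
    have h1 : HasDerivAt (fun s : ℝ => f (x + s • v)) (⟪f' (x + t • v), v⟫) t := by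
      have := ((hf' (x + t • v)).hasFDerivAt).comp_hasDerivAt t (hc t)
      simp [InnerProductSpace.toDual_apply_apply] at this; exact this
    have h2 : HasDerivAt (fun s : ℝ => s * ⟪f' x, v⟫) (⟪f' x, v⟫) t := by
      simpa using (hasDerivAt_id t).mul_const (⟪f' x, v⟫)
    have h3 : HasDerivAt (fun s : ℝ => (Lf : ℝ) * ‖v‖ ^ 2 * s ^ 2 / 2)
        ((Lf : ℝ) * ‖v‖ ^ 2 * t) t := by
      have := ((hasDerivAt_pow 2 t).const_mul ((Lf : ℝ) * ‖v‖ ^ 2)).div_const 2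
      convert this using 1
      · rfl
      · rfl
      · norm_num; ring
    exact (h1.sub h2).sub h3
  have hanti : AntitoneOn ψ (Set.Icc (0 : ℝ) 1) := by
    apply antitoneOn_of_deriv_nonpos (convex_Icc 0 1)
    · exact (fun t _ => ((hder t).continuousAt.continuousWithinAt))
    · exact fun t _ => ((hder t).differentiableAt).differentiableWithinAt
    · intro t ht
      rw [interior_Icc] at ht
      rw [(hder t).deriv]
      have hb : ⟪f' (x + t • v) - f' x, v⟫ ≤ ‖f' (x + t • v) - f' x‖ * ‖v‖ :=
        real_inner_le_norm _ _
      have hl : ‖f' (x + t • v) - f' x‖ ≤ (Lf : ℝ) * (t * ‖v‖) := by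
        have := hLip.dist_le_mul (x + t • v) x
        rw [dist_eq_norm] at this
        simpa [norm_smul, abs_of_nonneg ht.1.le, mul_assoc] using this
      have hvn : (0 : ℝ) ≤ ‖v‖ := norm_nonneg v
      have hinner : ⟪f' (x + t • v) - f' x, v⟫ = ⟪f' (x + t • v), v⟫ - ⟪f' x, v⟫ :=
        inner_sub_left _ _ _
      nlinarith [mul_le_mul_of_nonneg_right hl hvn]
  have h01 := hanti (by norm_num : (0:ℝ) ∈ Set.Icc (0:ℝ) 1) (by norm_num : (1:ℝ) ∈ Set.Icc (0:ℝ) 1)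
    (by norm_num)
  simp only [hψ, zero_smul, add_zero, one_smul] at h01
  have hxy : x + v = y := by rw [hv]; abel
  rw [hxy] at h01
  linarith

/-- For any `x`, minimizer `x_⋆` of `F = f + g`, and `γ ∈ (0, 1/L_f]`:
`F(P_γ(x)) - F(x_⋆) ≤ (1/(2γ))(1 - γ μ_f)‖x - x_⋆‖²`. -/
theorem upper_bound_dist_to_sol {n : ℕ} (f : Eucl n → ℝ) (f' : Eucl n → Eucl n)
    (g : Eucl n → EReal) (γ μ : ℝ) (p : Eucl n → Eucl n) (Lf : NNReal) (xstar : Eucl n)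
    (hμ0 : 0 ≤ μ)
    (hsc : ∀ x y : Eucl n, f x + ⟪f' x, y - x⟫ + μ / 2 * ‖y - x‖ ^ 2 ≤ f y)
    (hf' : ∀ x, HasGradientAt f (f' x) x)
    (hLip : LipschitzWith Lf f')
    (hg : ProperLscConvex g)
    (hγ : 0 < γ) (hγL : γ ≤ 1 / Lf)
    (hp : IsProx γ g p)
    (hstar : ∀ y, ((f xstar : ℝ) : EReal) + g xstar ≤ ((f y : ℝ) : EReal) + g y)
    (x : Eucl n) :
    ((f (p (x - γ • f' x)) : ℝ) : EReal) + g (p (x - γ • f' x))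
      ≤ (((f xstar : ℝ) : EReal) + g xstar)
        + ((1 / (2 * γ) * (1 - γ * μ) * ‖x - xstar‖ ^ 2 : ℝ) : EReal) := by
  obtain ⟨⟨x₀, hx₀⟩, hbot, _, hconv⟩ := hg
  set y := x - γ • f' x with hy
  set P := p y with hP
  have hγne : γ ≠ 0 := ne_of_gt hγ
  have h2γ : (0 : ℝ) < 2 * γ := by linarith
  have hgPtop : g P ≠ ⊤ := by
    intro h
    have h2 := (hp y x₀).trans_lt (EReal.add_lt_top hx₀ (EReal.coe_ne_top _))
    rw [← hP, h, EReal.top_add_coe] at h2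
    exact (lt_irrefl _ h2)
  obtain ⟨a, ha⟩ : ∃ a : ℝ, g P = (a : EReal) := by
    lift g P to ℝ using ⟨hgPtop, hbot P⟩ with a
    exact ⟨a, rfl⟩
  have hgstop : g xstar ≠ ⊤ := by
    intro h
    have h2 := (hstar x₀).trans_lt (EReal.add_lt_top (EReal.coe_ne_top _) hx₀)
    rw [h, EReal.add_top_of_ne_bot (EReal.coe_ne_bot _)] at h2
    exact (lt_irrefl _ h2)
  obtain ⟨b, hb⟩ : ∃ b : ℝ, g xstar = (b : EReal) := by
    lift g xstar to ℝ using ⟨hgstop, hbot xstar⟩ with b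
    exact ⟨b, rfl⟩
  -- key prox inequality
  have hkey : a ≤ b + ⟪P - y, xstar - P⟫ / γ := by
    have hstep : ∀ t : ℝ, 0 < t → t ≤ 1 →
        a ≤ b + ⟪P - y, xstar - P⟫ / γ + t * ‖xstar - P‖ ^ 2 / (2 * γ) := by
      intro t ht0 ht1
      have hprox := hp y ((1 - t) • P + t • xstar)
      rw [← hP, ha] at hprox
      have hcv := hconv P xstar (1 - t) t (by linarith) ht0.le (by ring)
      rw [ha, hb] at hcv
      have hcv' : g ((1 - t) • P + t • xstar) ≤ (((1 - t) * a + t * b : ℝ) : EReal) := by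
        rw [EReal.coe_add, EReal.coe_mul, EReal.coe_mul]; exact hcv
      have hR : a + ‖P - y‖ ^ 2 / (2 * γ)
          ≤ (1 - t) * a + t * b + ‖(1 - t) • P + t • xstar - y‖ ^ 2 / (2 * γ) := by
        have h := hprox.trans (add_le_add hcv' le_rfl)
        rw [← EReal.coe_add, ← EReal.coe_add] at h
        exact EReal.coe_le_coe_iff.mp h
      have hexp : (1 - t) • P + t • xstar - y = (P - y) + t • (xstar - P) := by module
      rw [hexp, norm_add_sq_real, real_inner_smul_right, norm_smul,
        Real.norm_eq_abs, abs_of_pos ht0] at hR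
      have e1 : (‖P - y‖ ^ 2 + 2 * (t * ⟪P - y, xstar - P⟫) + (t * ‖xstar - P‖) ^ 2) / (2 * γ)
          = ‖P - y‖ ^ 2 / (2 * γ) + t * (⟪P - y, xstar - P⟫ / γ)
            + t * (t * ‖xstar - P‖ ^ 2 / (2 * γ)) := by
        field_simp
      rw [e1] at hR
      have hta : t * a ≤ t * (b + ⟪P - y, xstar - P⟫ / γ + t * ‖xstar - P‖ ^ 2 / (2 * γ)) := by
        ring_nf; ring_nf at hR; linarith
      exact le_of_mul_le_mul_left hta ht0
    apply le_of_forall_sub_le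
    intro ε hε
    set d := ‖xstar - P‖ ^ 2 with hd
    have hd0 : (0:ℝ) ≤ d := sq_nonneg _
    set t := min 1 (2 * γ * ε / (d + 1)) with htdef
    have ht0 : 0 < t := lt_min one_pos (by positivity)
    have ht1 : t ≤ 1 := min_le_left _ _
    have hs := hstep t ht0 ht1
    have htb : t * d / (2 * γ) ≤ ε := by
      have h1 : t ≤ 2 * γ * ε / (d + 1) := min_le_right _ _
      have h2 : t * d ≤ 2 * γ * ε * (d / (d + 1)) := by
        calc t * d ≤ (2 * γ * ε / (d + 1)) * d := mul_le_mul_of_nonneg_right h1 hd0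
          _ = 2 * γ * ε * (d / (d + 1)) := by ring
      have h3 : d / (d + 1) ≤ 1 := by
        rw [div_le_one (by linarith)]; linarith
      have h4 : 2 * γ * ε * (d / (d + 1)) ≤ 2 * γ * ε * 1 :=
        mul_le_mul_of_nonneg_left h3 (by positivity)
      rw [div_le_iff₀ h2γ]
      nlinarith
    linarith
  -- descent lemma
  have hdesc : f P ≤ f x + ⟪f' x, P - x⟫ + (Lf : ℝ) / 2 * ‖P - x‖ ^ 2 :=
    descent_lemma f f' Lf hf' hLip x P
  have hLγ : (Lf : ℝ) / 2 * ‖P - x‖ ^ 2 ≤ ‖P - x‖ ^ 2 / (2 * γ) := by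
    rcases eq_or_lt_of_le (Lf.coe_nonneg) with h0 | h0
    · rw [← h0]
      simpa using div_nonneg (sq_nonneg ‖P - x‖) h2γ.le
    · have hγL' : γ * (Lf : ℝ) ≤ 1 := by
        rw [le_div_iff₀ h0] at hγL; linarith
      rw [le_div_iff₀ h2γ]
      nlinarith [sq_nonneg ‖P - x‖]
  have hstrong := hsc x xstar
  have hfinal : f P + a ≤ f xstar + b + 1 / (2 * γ) * (1 - γ * μ) * ‖x - xstar‖ ^ 2 := by
    have hPy : P - y = (P - x) + γ • f' x := by rw [hy]; module
    have hc : ⟪P - y, xstar - P⟫ = ⟪P - x, xstar - P⟫ + γ * ⟪f' x, xstar - P⟫ := by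
      rw [hPy, inner_add_left, real_inner_smul_left]
    have hsplit : xstar - x = (P - x) + (xstar - P) := by module
    have hns : ‖xstar - x‖ ^ 2 = ‖P - x‖ ^ 2 + 2 * ⟪P - x, xstar - P⟫ + ‖xstar - P‖ ^ 2 := by
      rw [hsplit, norm_add_sq_real]
    have hinner2 : ⟪f' x, xstar - x⟫ = ⟪f' x, P - x⟫ + ⟪f' x, xstar - P⟫ := by
      rw [hsplit, inner_add_right]
    have hnx : ‖x - xstar‖ = ‖xstar - x‖ := norm_sub_rev _ _
    rw [hnx]
    have hd2 : (0:ℝ) ≤ ‖xstar - P‖ ^ 2 := sq_nonneg _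
    have hdesc' : f P ≤ f x + ⟪f' x, P - x⟫ + ‖P - x‖ ^ 2 / (2 * γ) := by linarith
    have hkey2 : a ≤ b + ⟪P - x, xstar - P⟫ / γ + ⟪f' x, xstar - P⟫ := by
      rw [hc] at hkey
      have e : (⟪P - x, xstar - P⟫ + γ * ⟪f' x, xstar - P⟫) / γ
          = ⟪P - x, xstar - P⟫ / γ + ⟪f' x, xstar - P⟫ := by field_simp
      rw [e] at hkey; linarith
    have hstrong' : f x + ⟪f' x, P - x⟫ + ⟪f' x, xstar - P⟫
        + μ / 2 * ‖xstar - x‖ ^ 2 ≤ f xstar := by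
      rw [hinner2] at hstrong; linarith
    have h1 : ‖P - x‖ ^ 2 + 2 * ⟪P - x, xstar - P⟫ ≤ ‖xstar - x‖ ^ 2 := by linarith
    have h2 : (‖P - x‖ ^ 2 + 2 * ⟪P - x, xstar - P⟫) / (2 * γ) ≤ ‖xstar - x‖ ^ 2 / (2 * γ) := by
      gcongr
    have h3 : ‖P - x‖ ^ 2 / (2 * γ) + ⟪P - x, xstar - P⟫ / γ
        = (‖P - x‖ ^ 2 + 2 * ⟪P - x, xstar - P⟫) / (2 * γ) := by field_simp
    have h4 : ‖xstar - x‖ ^ 2 / (2 * γ)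
        = 1 / (2 * γ) * (1 - γ * μ) * ‖xstar - x‖ ^ 2 + μ / 2 * ‖xstar - x‖ ^ 2 := by
      field_simp; ring
    linarith
  rw [ha, hb, ← EReal.coe_add, ← EReal.coe_add, ← EReal.coe_add, EReal.coe_le_coe_iff]
  exact hfinal
end
end

section
/- If g : R^n → R ∪ {+∞} is block separable, i.e., g(x) = Σ_i g_i(x_i) for a partition of coordinates, then every element of the B-subdifferential and of the Clarke generalized Jacobian of prox_{γg} at any point is block diagonal with respect to this partition. -/
open scoped RealInnerProductSpace
open Filter Topology

noncomputable section

/-- B-subdifferential (limiting Jacobian) of a mapping `T` at `x`: limits of Jacobians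
along sequences of differentiability points converging to `x`. -/
def Bsubdiff {n : ℕ} (T : Eucl n → Eucl n) (x : Eucl n) : Set (Eucl n →L[ℝ] Eucl n) :=
  { H | ∃ u : ℕ → Eucl n, (∀ k, DifferentiableAt ℝ T (u k)) ∧
      Tendsto u atTop (𝓝 x) ∧ Tendsto (fun k => fderiv ℝ T (u k)) atTop (𝓝 H) }

/-- Clarke generalized Jacobian: convex hull of the B-subdifferential. -/
def ClarkeJacobian {n : ℕ} (T : Eucl n → Eucl n) (x : Eucl n) : Set (Eucl n →L[ℝ] Eucl n) :=
  convexHull ℝ (Bsubdiff T x)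

/-! ### Auxiliary lemmas -/

lemma normsq_diff {n : ℕ} (w z : Eucl n) : ‖w - z‖ ^ 2 = ∑ i, (w i - z i) ^ 2 := by
  rw [EuclideanSpace.norm_eq, Real.sq_sqrt (Finset.sum_nonneg fun i _ => sq_nonneg _)]
  simp [Real.norm_eq_abs, sq_abs]

lemma div_ineq {c A B U1 U2 : ℝ} (hc : 0 < c) (h : A + U1 / c ≤ B + U2 / c) :
    A * c + U1 ≤ B * c + U2 := by
  have h2 := mul_le_mul_of_nonneg_right h hc.le
  rw [add_mul, add_mul, div_mul_cancel₀ _ hc.ne', div_mul_cancel₀ _ hc.ne'] at h2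
  linarith

lemma prox_val_ne_top {n : ℕ} {g : Eucl n → EReal} {γ : ℝ} {p : Eucl n → Eucl n}
    (hg : ProperLscConvex g) (hγ : 0 < γ) (hp : IsProx γ g p) (x : Eucl n) :
    g (p x) ≠ ⊤ := by
  obtain ⟨z, hz⟩ := hg.1
  have h1 := hp x z
  have h0 : (0 : EReal) ≤ ((‖p x - x‖ ^ 2 / (2 * γ) : ℝ) : EReal) := by
    exact_mod_cast div_nonneg (sq_nonneg _) (by linarith)
  have h2 : g (p x) ≤ g z + ((‖z - x‖ ^ 2 / (2 * γ) : ℝ) : EReal) := by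
    calc g (p x) = g (p x) + 0 := by rw [add_zero]
    _ ≤ g (p x) + ((‖p x - x‖ ^ 2 / (2 * γ) : ℝ) : EReal) := add_le_add le_rfl h0
    _ ≤ _ := h1
  intro htop
  rw [htop] at h2
  exact (EReal.add_lt_top hz (EReal.coe_ne_top _)).ne (top_le_iff.mp h2)

/-- Separability of the proximal mapping: each block of `p x` depends only on the
corresponding block of `x`. -/
lemma prox_sep {n : ℕ} {ι : Type*} [Fintype ι]
    {g : Eucl n → EReal} {γ : ℝ} {p : Eucl n → Eucl n}
    {π : Fin n → ι} {G : ι → Eucl n → EReal}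
    (hg : ProperLscConvex g) (hγ : 0 < γ) (hp : IsProx γ g p)
    (hsep : ∀ x : Eucl n, g x = ∑ b : ι, G b x)
    (hdep : ∀ b : ι, ∀ x y : Eucl n, (∀ i, π i = b → x i = y i) → G b x = G b y)
    (b : ι) (x y : Eucl n) (hxy : ∀ i, π i = b → x i = y i) :
    ∀ i, π i = b → p x i = p y i := by
  classical
  have hbot := hg.2.1
  have hconv := hg.2.2.2
  set px := p x with hpx
  set py := p y with hpy
  set u : Eucl n := WithLp.toLp 2 (fun i => if π i = b then py i else px i : ∀ _ : Fin n, ℝ) with hu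
  set v : Eucl n := WithLp.toLp 2 (fun i => if π i = b then px i else py i : ∀ _ : Fin n, ℝ) with hv
  have hui : ∀ i, u i = if π i = b then py i else px i := fun i => rfl
  have hvi : ∀ i, v i = if π i = b then px i else py i := fun i => rfl
  -- g-sum identity
  have hgsum : g u + g v = g px + g py := by
    rw [hsep u, hsep v, hsep px, hsep py, ← Finset.sum_add_distrib, ← Finset.sum_add_distrib]
    refine Finset.sum_congr rfl fun c _ => ?_
    by_cases hc : c = b
    · subst hc
      rw [hdep c u py (fun i hi => by rw [hui i, if_pos hi]),
          hdep c v px (fun i hi => by rw [hvi i, if_pos hi])]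
      exact add_comm _ _
    · rw [hdep c u px (fun i hi => by rw [hui i, if_neg (hi ▸ hc)]),
          hdep c v py (fun i hi => by rw [hvi i, if_neg (hi ▸ hc)])]
  -- quadratic identity
  have hq : ‖u - x‖ ^ 2 + ‖v - y‖ ^ 2 = ‖px - x‖ ^ 2 + ‖py - y‖ ^ 2 := by
    rw [normsq_diff, normsq_diff, normsq_diff, normsq_diff,
        ← Finset.sum_add_distrib, ← Finset.sum_add_distrib]
    refine Finset.sum_congr rfl fun i _ => ?_
    by_cases hi : π i = b
    · rw [hui i, if_pos hi, hvi i, if_pos hi, hxy i hi]; ring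
    · rw [hui i, if_neg hi, hvi i, if_neg hi]
  -- finiteness
  have hpxt : g px ≠ ⊤ := prox_val_ne_top hg hγ hp x
  have hpyt : g py ≠ ⊤ := prox_val_ne_top hg hγ hp y
  have hut : g u ≠ ⊤ := by
    intro h
    have : g u + g v = ⊤ := by rw [h]; exact EReal.top_add_of_ne_bot (hbot v)
    rw [hgsum] at this
    exact (EReal.add_lt_top hpxt hpyt).ne this
  have hvt : g v ≠ ⊤ := by
    intro h
    have : g u + g v = ⊤ := by rw [add_comm, h]; exact EReal.top_add_of_ne_bot (hbot u)
    rw [hgsum] at this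
    exact (EReal.add_lt_top hpxt hpyt).ne this
  -- to real
  set a := (g px).toReal with hadef
  set d := (g py).toReal with hddef
  set au := (g u).toReal with haudef
  set av := (g v).toReal with havdef
  have hA : g px = (a : EReal) := (EReal.coe_toReal hpxt (hbot px)).symm
  have hD : g py = (d : EReal) := (EReal.coe_toReal hpyt (hbot py)).symm
  have hAU : g u = (au : EReal) := (EReal.coe_toReal hut (hbot u)).symm
  have hAV : g v = (av : EReal) := (EReal.coe_toReal hvt (hbot v)).symm
  have hc : (0:ℝ) < 2 * γ := by linarith
  have h1 : a * (2*γ) + ‖px - x‖ ^ 2 ≤ au * (2*γ) + ‖u - x‖ ^ 2 := by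
    have := hp x u
    rw [hA, hAU, ← EReal.coe_add, ← EReal.coe_add, EReal.coe_le_coe_iff] at this
    exact div_ineq hc this
  have h2 : d * (2*γ) + ‖py - y‖ ^ 2 ≤ av * (2*γ) + ‖v - y‖ ^ 2 := by
    have := hp y v
    rw [hD, hAV, ← EReal.coe_add, ← EReal.coe_add, EReal.coe_le_coe_iff] at this
    exact div_ineq hc this
  have hgr : au + av = a + d := by
    have := hgsum
    rw [hA, hD, hAU, hAV, ← EReal.coe_add, ← EReal.coe_add, EReal.coe_eq_coe_iff] at this
    exact this
  have hkey : au * (2*γ) + ‖u - x‖ ^ 2 = a * (2*γ) + ‖px - x‖ ^ 2 := by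
    have hgr' : au * (2*γ) + av * (2*γ) = a * (2*γ) + d * (2*γ) := by
      rw [← add_mul, ← add_mul, hgr]
    linarith
  -- midpoint argument
  set m : Eucl n := (1/2 : ℝ) • u + (1/2 : ℝ) • px with hm
  have hmi : ∀ i, m i = (1/2) * u i + (1/2) * px i := fun i => rfl
  have hgm_le : g m ≤ ((au/2 + a/2 : ℝ) : EReal) := by
    have := hconv u px (1/2) (1/2) (by norm_num) (by norm_num) (by norm_num)
    rw [hAU, hA] at this
    calc g m ≤ ((1/2 : ℝ) : EReal) * (au : EReal) + ((1/2 : ℝ) : EReal) * (a : EReal) := this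
    _ = _ := by norm_cast; ring
  have hmt : g m ≠ ⊤ := by
    intro h
    rw [h, top_le_iff] at hgm_le
    exact (EReal.coe_ne_top _) hgm_le
  set gm := (g m).toReal with hgmdef
  have hGM : g m = (gm : EReal) := (EReal.coe_toReal hmt (hbot m)).symm
  have hgm : gm ≤ au/2 + a/2 := by
    rw [hGM, EReal.coe_le_coe_iff] at hgm_le; exact hgm_le
  have h3 : a * (2*γ) + ‖px - x‖ ^ 2 ≤ gm * (2*γ) + ‖m - x‖ ^ 2 := by
    have := hp x m
    rw [hA, hGM, ← EReal.coe_add, ← EReal.coe_add, EReal.coe_le_coe_iff] at this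
    exact div_ineq hc this
  have hmid : ‖m - x‖ ^ 2 = (1/2)*‖u - x‖ ^ 2 + (1/2)*‖px - x‖ ^ 2 - (1/4)*‖u - px‖ ^ 2 := by
    rw [normsq_diff, normsq_diff, normsq_diff, normsq_diff, Finset.mul_sum, Finset.mul_sum,
        Finset.mul_sum, ← Finset.sum_add_distrib, ← Finset.sum_sub_distrib]
    refine Finset.sum_congr rfl fun i _ => ?_
    rw [hmi i]; ring
  have hgmc : gm * (2*γ) ≤ (au/2 + a/2) * (2*γ) := mul_le_mul_of_nonneg_right hgm hc.le
  have hN : ‖u - px‖ ^ 2 ≤ 0 := by nlinarith [hkey, h3, hgmc, hmid]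
  have hupx : u = px := by
    have h0 : ‖u - px‖ ^ 2 = 0 := le_antisymm hN (sq_nonneg _)
    have h1 := pow_eq_zero_iff (n := 2) (by norm_num) |>.mp h0
    rwa [norm_eq_zero, sub_eq_zero] at h1
  intro i hi
  have : u i = px i := by rw [hupx]
  rw [← this, hui i, if_pos hi]

/-- If `g` is block separable with respect to a partition `π` of the coordinates, then every
element of the B-subdifferential and of the Clarke generalized Jacobian of `prox_{γg}` is
block diagonal with respect to this partition (entries across different blocks vanish). -/
theorem prox_separable_block_diagonal {n : ℕ} {ι : Type*} [Fintype ι]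
    (g : Eucl n → EReal) (γ : ℝ) (p : Eucl n → Eucl n)
    (π : Fin n → ι) (G : ι → Eucl n → EReal)
    (hg : ProperLscConvex g) (hγ : 0 < γ) (hp : IsProx γ g p)
    (hsep : ∀ x : Eucl n, g x = ∑ b : ι, G b x)
    (hdep : ∀ b : ι, ∀ x y : Eucl n, (∀ i, π i = b → x i = y i) → G b x = G b y)
    (x : Eucl n) :
    (∀ H ∈ Bsubdiff p x, ∀ i j : Fin n, π i ≠ π j →
      ⟪H (EuclideanSpace.single j (1 : ℝ)), EuclideanSpace.single i (1 : ℝ)⟫ = 0) ∧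
    (∀ H ∈ ClarkeJacobian p x, ∀ i j : Fin n, π i ≠ π j →
      ⟪H (EuclideanSpace.single j (1 : ℝ)), EuclideanSpace.single i (1 : ℝ)⟫ = 0) := by
  have hps : ∀ (b : ι) (x y : Eucl n), (∀ i, π i = b → x i = y i) →
      ∀ i, π i = b → p x i = p y i := prox_sep hg hγ hp hsep hdep
  have hpart : ∀ H ∈ Bsubdiff p x, ∀ i j : Fin n, π i ≠ π j →
      ⟪H (EuclideanSpace.single j (1 : ℝ)), EuclideanSpace.single i (1 : ℝ)⟫ = 0 := by
    rintro H ⟨u, hdiff, hu, hH⟩ i j hij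
    set ej : Eucl n := EuclideanSpace.single j (1 : ℝ) with hej
    set ei : Eucl n := EuclideanSpace.single i (1 : ℝ) with hei
    have hz : ∀ k, (fderiv ℝ p (u k)) ej i = 0 := by
      intro k
      set w := u k with hw
      have hline : ∀ t : ℝ, HasDerivAt (fun t : ℝ => w + t • ej) ej t := by
        intro t
        simpa using ((hasDerivAt_id t).smul_const ej).const_add w
      have hc0 : w + (0:ℝ) • ej = w := by simp
      have hcomp : HasDerivAt (fun t : ℝ => p (w + t • ej)) ((fderiv ℝ p w) ej) 0 := by
        have hf : HasFDerivAt p (fderiv ℝ p w) ((fun t : ℝ => w + t • ej) 0) := by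
          simpa [hc0] using (hdiff k).hasFDerivAt
        exact hf.comp_hasDerivAt 0 (hline 0)
      have hproj : HasDerivAt (fun t : ℝ => p (w + t • ej) i) (((fderiv ℝ p w) ej) i) 0 := by
        have := ((EuclideanSpace.proj i : Eucl n →L[ℝ] ℝ).hasFDerivAt).comp_hasDerivAt 0 hcomp
        exact this
      have hconst : (fun t : ℝ => p (w + t • ej) i) = fun _ => p w i := by
        funext t
        refine hps (π i) (w + t • ej) w ?_ i rfl
        intro i' hi'
        have hi'j : i' ≠ j := fun h => hij (by rw [← hi', h])
        simp [ej, EuclideanSpace.single_apply, hi'j]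
      rw [hconst] at hproj
      exact (hasDerivAt_const (0:ℝ) (p w i)).unique hproj |>.symm
    have hcont : Tendsto (fun k => ((fderiv ℝ p (u k)) ej) i) atTop (𝓝 ((H ej) i)) := by
      have h1 : Continuous fun A : Eucl n →L[ℝ] Eucl n => (A ej) i :=
        ((EuclideanSpace.proj i : Eucl n →L[ℝ] ℝ).continuous).comp
          (ContinuousLinearMap.apply ℝ (Eucl n) ej).continuous
      exact (h1.tendsto H).comp hH
    have : (H ej) i = 0 := by
      have h0 : Tendsto (fun k => ((fderiv ℝ p (u k)) ej) i) atTop (𝓝 0) := by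
        simp only [hz]; exact tendsto_const_nhds
      exact tendsto_nhds_unique hcont h0
    rw [hei, EuclideanSpace.inner_single_right]
    simpa using this
  refine ⟨hpart, ?_⟩
  intro H hH i j hij
  have hsub : Bsubdiff p x ⊆ {A : Eucl n →L[ℝ] Eucl n |
      ⟪A (EuclideanSpace.single j (1 : ℝ)), EuclideanSpace.single i (1 : ℝ)⟫ = 0} :=
    fun A hA => hpart A hA i j hij
  have hconv : Convex ℝ {A : Eucl n →L[ℝ] Eucl n |
      ⟪A (EuclideanSpace.single j (1 : ℝ)), EuclideanSpace.single i (1 : ℝ)⟫ = 0} := by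
    intro A hA B hB a b ha hb hab
    simp only [Set.mem_setOf_eq] at hA hB ⊢
    simp [ContinuousLinearMap.add_apply, ContinuousLinearMap.smul_apply, inner_add_left,
      real_inner_smul_left, EuclideanSpace.inner_single_right] at hA hB ⊢
    simp [hA, hB]
  exact convexHull_min hsub hconv hH
end
end
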